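/- arXiv:1008.0192 — 2 statements merged into one kernel-verified Lean document; each statement's English description precedes it below -/
import Mathlib

section
/- For any γ ∈ (1,2], there exists a branching mechanism ψ of Lévy–Khintchine form such that the lower and upper exponents of ψ at infinity satisfy γ_ψ = η_ψ = γ, while the exponent δ_ψ = sup{c ≥ 0 : ∃ Q > 0, Q ψ(u)u^{-c} ≤ ψ(v)v^{-c} for 1 ≤ u ≤ v} equals 1. -/
set_option maxHeartbeats 1000000
open MeasureTheory Real Set Filter

noncomputable def ff (x : ℝ) : ℝ := Real.exp (-x) - 1 + x

lemma ff_nonneg (x : ℝ) : 0 ≤ ff x := by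
  have h := Real.add_one_le_exp (-x); unfold ff; linarith

lemma ff_le_self {x : ℝ} (hx : 0 ≤ x) : ff x ≤ x := by
  have h : Real.exp (-x) ≤ 1 := Real.exp_le_one_iff.mpr (by linarith)
  unfold ff; linarith

lemma ff_hasDerivAt (x : ℝ) : HasDerivAt ff (1 - Real.exp (-x)) x := by
  have h1 : HasDerivAt (fun x : ℝ => Real.exp (-x)) (-Real.exp (-x)) x := by
    simpa using (hasDerivAt_neg x).exp
  have := ((h1.sub_const 1).add (hasDerivAt_id x))
  exact this.congr_deriv (by ring)

/-- generic: if g has deriv nonneg on [a,∞) then g a ≤ g x for x ≥ a -/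
lemma le_of_deriv_nonneg {g g' : ℝ → ℝ} (hd : ∀ y, HasDerivAt g (g' y) y)
    {a x : ℝ} (hax : a ≤ x) (h' : ∀ y, a ≤ y → 0 ≤ g' y) : g a ≤ g x := by
  have hmono : MonotoneOn g (Set.Ici a) := by
    apply monotoneOn_of_deriv_nonneg (convex_Ici a)
      (fun y _ => (hd y).continuousAt.continuousWithinAt)
      (fun y _ => (hd y).differentiableAt.differentiableWithinAt)
    intro y hy
    rw [(hd y).deriv]
    exact h' y (le_of_lt (by simpa using hy))
  exact hmono (by simp) (by simpa using hax) hax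

lemma ff_le_sq {x : ℝ} (hx : 0 ≤ x) : ff x ≤ x ^ 2 / 2 := by
  have hd : ∀ y : ℝ, HasDerivAt (fun x : ℝ => x ^ 2 / 2 - ff x) (ff y) y := by
    intro y
    have h1 : HasDerivAt (fun x : ℝ => x ^ 2 / 2) y y := by
      simpa using ((hasDerivAt_pow 2 y).div_const 2)
    have := h1.sub (ff_hasDerivAt y)
    apply this.congr_deriv; unfold ff; ring
  have h0 := le_of_deriv_nonneg hd hx (fun y _ => ff_nonneg y)
  simp only [ff] at h0 ⊢
  simp at h0; linarith

lemma ff_ge_lin {x : ℝ} (hx : 1 ≤ x) : x / Real.exp 1 ≤ ff x := by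
  have hd : ∀ y : ℝ, HasDerivAt (fun x : ℝ => ff x - x / Real.exp 1)
      (1 - Real.exp (-y) - 1 / Real.exp 1) y := by
    intro y
    have := (ff_hasDerivAt y).sub ((hasDerivAt_id y).div_const (Real.exp 1))
    apply this.congr_deriv; ring
  have h0 := le_of_deriv_nonneg hd hx (fun y hy => by
    have : Real.exp (-y) ≤ Real.exp (-1) := Real.exp_le_exp.mpr (by linarith)
    have h2 : Real.exp (-1) = 1 / Real.exp 1 := by
      rw [Real.exp_neg]; ring
    have he : (2:ℝ) ≤ Real.exp 1 := by linarith [Real.add_one_le_exp 1]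
    have h3 : 1 / Real.exp 1 ≤ 1 / 2 := by
      apply one_div_le_one_div_of_le <;> linarith
    linarith)
  have h1 : ff 1 = Real.exp (-1) := by unfold ff; ring
  have h2 : Real.exp (-1) = 1 / Real.exp 1 := by rw [Real.exp_neg]; ring
  rw [h1, h2] at h0
  linarith

lemma ff_ge_sq {x : ℝ} (h0 : 0 ≤ x) (h1 : x ≤ 1) : x ^ 2 / (2 * Real.exp 1) ≤ ff x := by
  -- first: 1 - exp(-y) - y/e ≥ 0 on [0,1], via second derivative
  have key : ∀ y : ℝ, 0 ≤ y → y ≤ 1 → 0 ≤ 1 - Real.exp (-y) - y / Real.exp 1 := by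
    intro y hy0 hy1
    -- h(y) = 1 - exp(-y) - y/e : h(0)=0, h'(y) = exp(-y) - 1/e ≥ 0 on [0,1]... but only on [0,1];
    have hd : ∀ z : ℝ, HasDerivAt (fun y : ℝ => 1 - Real.exp (-y) - y / Real.exp 1)
        (Real.exp (-z) - 1 / Real.exp 1) z := by
      intro z
      have h1 : HasDerivAt (fun y : ℝ => Real.exp (-y)) (-Real.exp (-z)) z := by
        simpa using (hasDerivAt_neg z).exp
      have := ((hasDerivAt_const z (1:ℝ)).sub h1).sub ((hasDerivAt_id z).div_const (Real.exp 1))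
      apply this.congr_deriv; ring
    have hmono : MonotoneOn (fun y : ℝ => 1 - Real.exp (-y) - y / Real.exp 1) (Set.Icc 0 1) := by
      apply monotoneOn_of_deriv_nonneg (convex_Icc 0 1)
        (fun z _ => (hd z).continuousAt.continuousWithinAt)
        (fun z _ => (hd z).differentiableAt.differentiableWithinAt)
      intro z hz
      rw [(hd z).deriv]
      rw [interior_Icc] at hz
      have : Real.exp (-1) ≤ Real.exp (-z) := Real.exp_le_exp.mpr (by linarith [hz.2])
      have h2 : Real.exp (-1) = 1 / Real.exp 1 := by rw [Real.exp_neg]; ring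
      linarith
    have := hmono (Set.mem_Icc.mpr ⟨le_refl 0, zero_le_one⟩) (Set.mem_Icc.mpr ⟨hy0, hy1⟩) hy0
    simpa using this
  -- now g(x) = ff x - x^2/(2e), g' (y) = 1 - exp(-y) - y/e ≥ 0 on [0,1]
  have hd : ∀ z : ℝ, HasDerivAt (fun x : ℝ => ff x - x ^ 2 / (2 * Real.exp 1))
      (1 - Real.exp (-z) - z / Real.exp 1) z := by
    intro z
    have h1 : HasDerivAt (fun x : ℝ => x ^ 2 / (2 * Real.exp 1)) (z / Real.exp 1) z := by
      have := (hasDerivAt_pow 2 z).div_const (2 * Real.exp 1)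
      apply this.congr_deriv
      field_simp; ring
    have := (ff_hasDerivAt z).sub h1
    apply this.congr_deriv; ring
  have hmono : MonotoneOn (fun x : ℝ => ff x - x ^ 2 / (2 * Real.exp 1)) (Set.Icc 0 1) := by
    apply monotoneOn_of_deriv_nonneg (convex_Icc 0 1)
      (fun z _ => (hd z).continuousAt.continuousWithinAt)
      (fun z _ => (hd z).differentiableAt.differentiableWithinAt)
    intro z hz
    rw [(hd z).deriv]
    rw [interior_Icc] at hz
    exact key z (le_of_lt hz.1) (le_of_lt hz.2)
  have := hmono (Set.mem_Icc.mpr ⟨le_refl 0, zero_le_one⟩) (Set.mem_Icc.mpr ⟨h0, h1⟩) h0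
  simp only [ff] at this ⊢
  simp at this; linarith

/-- slope monotonicity: for 0 ≤ x ≤ y, ff x * y ≤ ff y * x -/
lemma ff_slope {x y : ℝ} (hx : 0 ≤ x) (hxy : x ≤ y) : ff x * y ≤ ff y * x := by
  rcases eq_or_lt_of_le hx with h|hx0
  · simp [← h, ff]
  rcases eq_or_lt_of_le hxy with h|hxy0
  · rw [h]
  -- ff x / x ≤ ff y / y for 0 < x < y
  have hy0 : 0 < y := lt_trans hx0 hxy0
  have hd : ∀ z : ℝ, 0 < z → HasDerivAt (fun t : ℝ => ff t / t)
      (((1 - Real.exp (-z)) * z - ff z) / z ^ 2) z := by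
    intro z hz
    have := (ff_hasDerivAt z).div (hasDerivAt_id z) (ne_of_gt hz)
    simp only [id] at this
    apply this.congr_deriv; ring
  have hmono : MonotoneOn (fun t : ℝ => ff t / t) (Set.Icc x y) := by
    apply monotoneOn_of_deriv_nonneg (convex_Icc x y)
    · intro z hz
      exact ((hd z (lt_of_lt_of_le hx0 hz.1)).continuousAt).continuousWithinAt
    · intro z hz
      rw [interior_Icc] at hz
      exact ((hd z (lt_trans hx0 hz.1)).differentiableAt).differentiableWithinAt
    · intro z hz
      rw [interior_Icc] at hz
      have hz0 : 0 < z := lt_trans hx0 hz.1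
      rw [(hd z hz0).deriv]
      apply div_nonneg _ (sq_nonneg z)
      have h := Real.add_one_le_exp z
      have h2 : Real.exp (-z) * (1 + z) ≤ 1 := by
        rw [Real.exp_neg]
        rw [inv_mul_le_iff₀ (Real.exp_pos z)]
        linarith
      unfold ff
      nlinarith [Real.exp_pos (-z)]
  have := hmono (Set.mem_Icc.mpr ⟨le_refl x, hxy⟩) (Set.mem_Icc.mpr ⟨hxy, le_refl y⟩) hxy
  simp only at this
  rw [div_le_div_iff₀ hx0 hy0] at this
  exact this

noncomputable def bb (n : ℕ) : ℝ := ((n:ℝ)+1)^2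
noncomputable def dd (n : ℕ) : ℝ := ((n:ℝ)+1) * Real.sqrt ((n:ℝ)+1)

lemma one_le_bb (n : ℕ) : 1 ≤ bb n := by
  unfold bb; nlinarith [Nat.cast_nonneg (α := ℝ) n]

lemma bb_nonneg (n : ℕ) : 0 ≤ bb n := le_trans zero_le_one (one_le_bb n)

lemma bb_mono : Monotone bb := by
  apply monotone_nat_of_le_succ
  intro n; unfold bb; push_cast; nlinarith [Nat.cast_nonneg (α := ℝ) n]

lemma bb_succ (n : ℕ) : bb (n+1) = bb n + (2*((n:ℝ)+1)+1) := by
  unfold bb; push_cast; ring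

lemma sqrt_ge_one (n : ℕ) : 1 ≤ Real.sqrt ((n:ℝ)+1) :=
  Real.one_le_sqrt.mpr (by linarith [Nat.cast_nonneg (α := ℝ) n])

lemma dd_ge (n : ℕ) : (n:ℝ)+1 ≤ dd n := by
  unfold dd
  nlinarith [sqrt_ge_one n, Nat.cast_nonneg (α := ℝ) n]

lemma dd_nonneg (n : ℕ) : 0 ≤ dd n := by
  linarith [dd_ge n, Nat.cast_nonneg (α := ℝ) n]

lemma dd_le_bb (n : ℕ) : dd n ≤ bb n := by
  unfold dd bb
  have h1 : Real.sqrt ((n:ℝ)+1) ≤ (n:ℝ)+1 := by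
    rw [show ((n:ℝ)+1) = Real.sqrt (((n:ℝ)+1)^2) from (Real.sqrt_sq (by positivity)).symm]
    nth_rewrite 1 [Real.sqrt_sq (by positivity)]
    exact Real.sqrt_le_sqrt (by nlinarith [Nat.cast_nonneg (α := ℝ) n])
  nlinarith [Nat.cast_nonneg (α := ℝ) n]

lemma dd_succ_ge (n : ℕ) : dd n + Real.sqrt ((n:ℝ)+1) ≤ dd (n+1) := by
  unfold dd
  push_cast
  have h1 : Real.sqrt ((n:ℝ)+1) ≤ Real.sqrt ((n:ℝ)+1+1) := Real.sqrt_le_sqrt (by linarith)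
  nlinarith [Nat.cast_nonneg (α := ℝ) n, Real.sqrt_nonneg ((n:ℝ)+1)]

lemma dd_succ_ge_one (n : ℕ) : dd n + 1 ≤ dd (n+1) :=
  le_trans (by linarith [sqrt_ge_one n]) (dd_succ_ge n)

lemma dd_mono : Monotone dd := by
  apply monotone_nat_of_le_succ
  intro n; linarith [dd_succ_ge_one n]

lemma dd_add_ge (n k : ℕ) : dd n + k ≤ dd (n+k) := by
  induction k with
  | zero => simp
  | succ k ih =>
    have := dd_succ_ge_one (n+k)
    push_cast at *
    calc dd n + ((k:ℝ)+1) ≤ dd (n+k) + 1 := by linarith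
    _ ≤ dd (n+k+1) := this

lemma dd_succ_le (n : ℕ) : dd (n+1) ≤ dd n + 3 * Real.sqrt ((n:ℝ)+1) := by
  unfold dd
  push_cast
  -- (m+1)√(m+1) ≤ (m+3)√m  with m = n+1
  set m : ℝ := (n:ℝ)+1 with hm
  have hm1 : 1 ≤ m := by rw [hm]; linarith [Nat.cast_nonneg (α := ℝ) n]
  have key : (m+1) * Real.sqrt (m+1) ≤ (m+3) * Real.sqrt m := by
    have e1 : (m+1) * Real.sqrt (m+1) = Real.sqrt ((m+1)^2 * (m+1)) := by
      rw [Real.sqrt_mul (by positivity), Real.sqrt_sq (by linarith)]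
    have e2 : (m+3) * Real.sqrt m = Real.sqrt ((m+3)^2 * m) := by
      rw [Real.sqrt_mul (by positivity), Real.sqrt_sq (by linarith)]
    rw [e1, e2]
    apply Real.sqrt_le_sqrt
    nlinarith
  nlinarith [Real.sqrt_nonneg m]

lemma sqrt_tendsto : Tendsto (fun n : ℕ => Real.sqrt ((n:ℝ)+1)) atTop atTop := by
  rw [tendsto_atTop]
  intro M
  have h := (tendsto_atTop_add_const_right atTop (1:ℝ)
    tendsto_natCast_atTop_atTop).eventually_ge_atTop (M^2)
  filter_upwards [h] with n hn
  calc M ≤ |M| := le_abs_self M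
  _ = Real.sqrt (M^2) := (Real.sqrt_sq_eq_abs M).symm
  _ ≤ Real.sqrt ((n:ℝ)+1) := Real.sqrt_le_sqrt hn

/-- master divergence lemma -/
lemma master (p q : ℝ) (hp : 0 < p) :
    Tendsto (fun n : ℕ => p * bb n - q * dd n) atTop atTop := by
  apply tendsto_atTop_mono' atTop (f₁ := fun n : ℕ => (n:ℝ)+1)
    (by
    have h1 : ∀ᶠ n : ℕ in atTop, (q+2)/p ≤ Real.sqrt ((n:ℝ)+1) :=
      sqrt_tendsto.eventually_ge_atTop _
    filter_upwards [h1] with n hn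
    have hs1 : 1 ≤ Real.sqrt ((n:ℝ)+1) := sqrt_ge_one n
    have hsq : Real.sqrt ((n:ℝ)+1) * Real.sqrt ((n:ℝ)+1) = (n:ℝ)+1 :=
      Real.mul_self_sqrt (by positivity)
    have hq2 : q + 2 ≤ p * Real.sqrt ((n:ℝ)+1) := by
      rw [div_le_iff₀ hp] at hn; linarith [hn]
    -- p * bb n - q * dd n = m(p m - q √m) with m = n+1
    unfold bb dd
    set s := Real.sqrt ((n:ℝ)+1) with hs
    have : p * ((n:ℝ)+1) - q * s ≥ 1 := by
      have : p * ((n:ℝ)+1) = (p * s) * s := by rw [mul_assoc, hsq]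
      rw [this]
      nlinarith
    nlinarith [Nat.cast_nonneg (α := ℝ) n])
  exact tendsto_atTop_add_const_right _ 1 tendsto_natCast_atTop_atTop

lemma master_exp (p q K : ℝ) (hp : 0 < p) :
    Tendsto (fun n : ℕ => Real.exp (p * bb n - q * dd n - K)) atTop atTop := by
  apply Real.tendsto_exp_atTop.comp
  exact tendsto_atTop_add_const_right _ (-K) (master p q hp)

lemma master_exp0 (p q K : ℝ) (hp : 0 < p) :
    Tendsto (fun n : ℕ => Real.exp (-(p * bb n) + q * dd n + K)) atTop (nhds 0) := by
  apply Real.tendsto_exp_atBot.comp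
  have h1 := (tendsto_atTop_add_const_right atTop (-K) (master p q hp))
  have h2 := tendsto_neg_atBot_iff.mpr h1
  apply h2.congr
  intro n; ring

lemma bb_tendsto : Tendsto (fun n : ℕ => bb n) atTop atTop := by
  apply tendsto_atTop_mono (fun n => by linarith [dd_ge n, dd_le_bb n] : ∀ n : ℕ, (n:ℝ)+1 ≤ bb n)
  exact tendsto_atTop_add_const_right _ 1 tendsto_natCast_atTop_atTop

/-- coverage: every l ≥ exp (bb N) lies in some [exp (bb n), exp (bb (n+1))] with n ≥ N -/
lemma coverage (N : ℕ) (l : ℝ) (hl : Real.exp (bb N) ≤ l) :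
    ∃ n : ℕ, N ≤ n ∧ Real.exp (bb n) ≤ l ∧ l ≤ Real.exp (bb (n+1)) := by
  classical
  have hl0 : 0 < l := lt_of_lt_of_le (Real.exp_pos _) hl
  obtain ⟨M, hM1, hM2⟩ :=
    ((bb_tendsto.eventually_gt_atTop (Real.log l)).and (eventually_ge_atTop N)).exists
  have hPM : ¬ (Real.exp (bb M) ≤ l) := by
    push_neg
    calc l = Real.exp (Real.log l) := (Real.exp_log hl0).symm
    _ < Real.exp (bb M) := Real.exp_lt_exp.mpr hM1
  set P : ℕ → Prop := fun k => Real.exp (bb k) ≤ l with hP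
  have hPN : P N := hl
  refine ⟨Nat.findGreatest P M, Nat.le_findGreatest hM2 hPN,
    Nat.findGreatest_spec hM2 hPN, ?_⟩
  have hlt : Nat.findGreatest P M < M := by
    rcases lt_or_eq_of_le (Nat.findGreatest_le (P := P) M) with h|h
    · exact h
    · exact absurd (h ▸ Nat.findGreatest_spec hM2 hPN) hPM
  have := Nat.findGreatest_is_greatest (P := P) (n := M)
    (k := Nat.findGreatest P M + 1) (Nat.lt_succ_self _) hlt
  simp only [hP] at this
  push_neg at this
  exact le_of_lt this
noncomputable def rr (n : ℕ) : ℝ := Real.exp (-(bb n))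
noncomputable def aa (γ : ℝ) (n : ℕ) : ℝ := Real.exp (γ * bb n - dd n)
noncomputable def psi (γ : ℝ) (l : ℝ) : ℝ := ∑' n, aa γ n * ff (l * rr n)

lemma rr_pos (n : ℕ) : 0 < rr n := Real.exp_pos _
lemma rr_le_one (n : ℕ) : rr n ≤ 1 := by
  unfold rr; rw [Real.exp_le_one_iff]; linarith [bb_nonneg n]
lemma aa_pos (γ : ℝ) (n : ℕ) : 0 < aa γ n := Real.exp_pos _

lemma exp_rpow' (x y : ℝ) : Real.exp x ^ (y:ℝ) = Real.exp (x*y) := by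
  rw [Real.rpow_def_of_pos (Real.exp_pos x), Real.log_exp]

lemma aa_rr_sq (γ : ℝ) (n : ℕ) : aa γ n * rr n ^ 2 = Real.exp ((γ-2) * bb n - dd n) := by
  unfold aa rr
  rw [← Real.exp_nat_mul, ← Real.exp_add]
  ring_nf

lemma aa_rr (γ : ℝ) (n : ℕ) : aa γ n * rr n = Real.exp ((γ-1) * bb n - dd n) := by
  unfold aa rr
  rw [← Real.exp_add]; ring_nf

lemma exp_neg_nat (n : ℕ) (t : ℝ) : Real.exp (-(t + n)) = Real.exp (-t) * (Real.exp (-1))^n := by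
  rw [← Real.exp_nat_mul, ← Real.exp_add]; ring_nf

lemma summable_expdd : Summable (fun n : ℕ => Real.exp (-dd n)) := by
  apply Summable.of_nonneg_of_le (fun n => (Real.exp_pos _).le) (fun n => ?_)
    (summable_geometric_of_lt_one (le_of_lt (Real.exp_pos (-1)))
      (Real.exp_lt_one_iff.mpr (by norm_num)))
  have h1 : ((n:ℝ)) ≤ dd n := by linarith [dd_ge n]
  calc Real.exp (-dd n) ≤ Real.exp (-(n:ℝ)) := Real.exp_le_exp.mpr (by linarith)
  _ = (Real.exp (-1))^n := by rw [← Real.exp_nat_mul]; ring_nf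

lemma term_nonneg (γ : ℝ) (l : ℝ) (hl : 0 ≤ l) (n : ℕ) : 0 ≤ aa γ n * ff (l * rr n) :=
  mul_nonneg (aa_pos γ n).le (ff_nonneg _)

lemma term_le_sq (γ : ℝ) (hγ2 : γ ≤ 2) (l : ℝ) (hl : 0 ≤ l) (n : ℕ) :
    aa γ n * ff (l * rr n) ≤ l^2/2 * Real.exp (-dd n) := by
  have h1 : ff (l * rr n) ≤ (l * rr n)^2/2 := ff_le_sq (mul_nonneg hl (rr_pos n).le)
  have h2 : aa γ n * ((l * rr n)^2/2) = l^2/2 * (aa γ n * rr n ^2) := by ring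
  calc aa γ n * ff (l * rr n) ≤ aa γ n * ((l * rr n)^2/2) := by
        exact mul_le_mul_of_nonneg_left h1 (aa_pos γ n).le
  _ = l^2/2 * (aa γ n * rr n ^2) := h2
  _ ≤ l^2/2 * Real.exp (-dd n) := by
        apply mul_le_mul_of_nonneg_left _ (by positivity)
        rw [aa_rr_sq]
        apply Real.exp_le_exp.mpr
        nlinarith [bb_nonneg n, one_le_bb n]

lemma summable_main (γ : ℝ) (hγ2 : γ ≤ 2) (l : ℝ) (hl : 0 ≤ l) :
    Summable (fun n => aa γ n * ff (l * rr n)) :=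
  Summable.of_nonneg_of_le (term_nonneg γ l hl) (term_le_sq γ hγ2 l hl)
    (summable_expdd.mul_left _)
lemma exp_inv_le_half : Real.exp (-1) ≤ 1/2 := by
  have h := Real.add_one_le_exp 1
  rw [Real.exp_neg]
  rw [inv_le_comm₀ (Real.exp_pos 1) (by norm_num)]
  linarith

lemma tsum_tail (n : ℕ) : ∑' i : ℕ, Real.exp (-dd (i+(n+1))) ≤ 2 * Real.exp (-dd (n+1)) := by
  have hs1 : Summable (fun i : ℕ => Real.exp (-dd (i+(n+1)))) :=
    (summable_nat_add_iff (n+1)).mpr summable_expdd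
  have hgeo : Summable (fun i : ℕ => Real.exp (-dd (n+1)) * (Real.exp (-1))^i) :=
    (summable_geometric_of_lt_one (le_of_lt (Real.exp_pos (-1)))
      (Real.exp_lt_one_iff.mpr (by norm_num))).mul_left _
  have h1 : ∀ i : ℕ, Real.exp (-dd (i+(n+1))) ≤ Real.exp (-dd (n+1)) * (Real.exp (-1))^i := by
    intro i
    rw [← exp_neg_nat i (dd (n+1))]
    apply Real.exp_le_exp.mpr
    have := dd_add_ge (n+1) i
    rw [show n+1+i = i+(n+1) from by omega] at this
    linarith
  calc ∑' i : ℕ, Real.exp (-dd (i+(n+1)))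
      ≤ ∑' i : ℕ, Real.exp (-dd (n+1)) * (Real.exp (-1))^i := Summable.tsum_le_tsum h1 hs1 hgeo
  _ = Real.exp (-dd (n+1)) * (1 - Real.exp (-1))⁻¹ := by
      rw [tsum_mul_left, tsum_geometric_of_lt_one (le_of_lt (Real.exp_pos (-1)))
        (Real.exp_lt_one_iff.mpr (by norm_num))]
  _ ≤ Real.exp (-dd (n+1)) * 2 := by
      apply mul_le_mul_of_nonneg_left _ (Real.exp_pos _).le
      have h2 : (1:ℝ)/2 ≤ 1 - Real.exp (-1) := by linarith [exp_inv_le_half]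
      calc (1 - Real.exp (-1))⁻¹ ≤ ((1:ℝ)/2)⁻¹ := by
            apply inv_anti₀ (by norm_num) h2
      _ = 2 := by norm_num
  _ = 2 * Real.exp (-dd (n+1)) := by ring

lemma psi_upper (γ : ℝ) (hγ1 : 1 ≤ γ) (hγ2 : γ ≤ 2) {l : ℝ} (hl : 0 ≤ l) (n : ℕ) :
    psi γ l ≤ ((n:ℝ)+1) * Real.exp ((γ-1) * bb n) * l
      + Real.exp ((γ-2) * bb (n+1) - dd (n+1)) * l^2 := by
  have hsum := summable_main γ hγ2 l hl
  have hsplit := Summable.sum_add_tsum_nat_add (f := fun k => aa γ k * ff (l * rr k)) (n+1) hsum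
  rw [show psi γ l = ∑' k, aa γ k * ff (l * rr k) from rfl, ← hsplit]
  have hhead : ∑ k ∈ Finset.range (n+1), aa γ k * ff (l * rr k)
      ≤ ((n:ℝ)+1) * Real.exp ((γ-1) * bb n) * l := by
    have hbd : ∀ k ∈ Finset.range (n+1), aa γ k * ff (l * rr k)
        ≤ Real.exp ((γ-1) * bb n) * l := by
      intro k hk
      have hkn : k ≤ n := Nat.lt_succ_iff.mp (Finset.mem_range.mp hk)
      calc aa γ k * ff (l * rr k) ≤ aa γ k * (l * rr k) :=
            mul_le_mul_of_nonneg_left (ff_le_self (mul_nonneg hl (rr_pos k).le)) (aa_pos γ k).le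
      _ = (aa γ k * rr k) * l := by ring
      _ ≤ Real.exp ((γ-1) * bb n) * l := by
          apply mul_le_mul_of_nonneg_right _ hl
          rw [aa_rr]
          apply Real.exp_le_exp.mpr
          have h1 : (γ-1) * bb k ≤ (γ-1) * bb n :=
            mul_le_mul_of_nonneg_left (bb_mono hkn) (by linarith)
          linarith [dd_nonneg k]
    calc ∑ k ∈ Finset.range (n+1), aa γ k * ff (l * rr k)
        ≤ ∑ _k ∈ Finset.range (n+1), Real.exp ((γ-1) * bb n) * l := Finset.sum_le_sum hbd
    _ = ((n:ℝ)+1) * Real.exp ((γ-1) * bb n) * l := by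
        rw [Finset.sum_const, Finset.card_range]
        push_cast; ring
  have htail : ∑' i : ℕ, aa γ (i+(n+1)) * ff (l * rr (i+(n+1)))
      ≤ Real.exp ((γ-2) * bb (n+1) - dd (n+1)) * l^2 := by
    have hs1 : Summable (fun i : ℕ => aa γ (i+(n+1)) * ff (l * rr (i+(n+1)))) :=
      (summable_nat_add_iff (n+1)).mpr hsum
    have hs2 : Summable (fun i : ℕ =>
        l^2/2 * Real.exp ((γ-2) * bb (n+1)) * Real.exp (-dd (i+(n+1)))) :=
      ((summable_nat_add_iff (n+1)).mpr summable_expdd).mul_left _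
    have h1 : ∀ i : ℕ, aa γ (i+(n+1)) * ff (l * rr (i+(n+1)))
        ≤ l^2/2 * Real.exp ((γ-2) * bb (n+1)) * Real.exp (-dd (i+(n+1))) := by
      intro i
      calc aa γ (i+(n+1)) * ff (l * rr (i+(n+1)))
          ≤ aa γ (i+(n+1)) * ((l * rr (i+(n+1)))^2/2) :=
            mul_le_mul_of_nonneg_left (ff_le_sq (mul_nonneg hl (rr_pos _).le)) (aa_pos γ _).le
      _ = l^2/2 * (aa γ (i+(n+1)) * rr (i+(n+1))^2) := by ring
      _ = l^2/2 * Real.exp ((γ-2) * bb (i+(n+1)) - dd (i+(n+1))) := by rw [aa_rr_sq]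
      _ ≤ l^2/2 * Real.exp ((γ-2) * bb (n+1)) * Real.exp (-dd (i+(n+1))) := by
          rw [mul_assoc, ← Real.exp_add]
          apply mul_le_mul_of_nonneg_left _ (by positivity)
          apply Real.exp_le_exp.mpr
          have h2 : (γ-2) * bb (i+(n+1)) ≤ (γ-2) * bb (n+1) :=
            mul_le_mul_of_nonpos_left (bb_mono (by omega)) (by linarith)
          linarith
    calc ∑' i : ℕ, aa γ (i+(n+1)) * ff (l * rr (i+(n+1)))
        ≤ ∑' i : ℕ, l^2/2 * Real.exp ((γ-2) * bb (n+1)) * Real.exp (-dd (i+(n+1))) :=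
          Summable.tsum_le_tsum h1 hs1 hs2
    _ = l^2/2 * Real.exp ((γ-2) * bb (n+1)) * ∑' i : ℕ, Real.exp (-dd (i+(n+1))) := by
        rw [tsum_mul_left]
    _ ≤ l^2/2 * Real.exp ((γ-2) * bb (n+1)) * (2 * Real.exp (-dd (n+1))) := by
        apply mul_le_mul_of_nonneg_left (tsum_tail n) (by positivity)
    _ = Real.exp ((γ-2) * bb (n+1) - dd (n+1)) * l^2 := by
        rw [Real.exp_sub, Real.exp_neg]
        field_simp
  linarith

lemma psi_lower_atom (γ : ℝ) (hγ2 : γ ≤ 2) {l : ℝ} (hl : 0 ≤ l) (n : ℕ) :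
    aa γ n * ff (l * rr n) ≤ psi γ l :=
  Summable.le_tsum (summable_main γ hγ2 l hl) n (fun j _ => term_nonneg γ l hl j)

lemma psi_nonneg (γ : ℝ) (hγ2 : γ ≤ 2) {l : ℝ} (hl : 0 ≤ l) : 0 ≤ psi γ l :=
  tsum_nonneg (term_nonneg γ l hl)

lemma psi_lower_lin (γ : ℝ) (hγ2 : γ ≤ 2) {l : ℝ} (n : ℕ) (hl : Real.exp (bb n) ≤ l) :
    Real.exp ((γ-1) * bb n - dd n - 1) * l ≤ psi γ l := by
  have hl0 : 0 ≤ l := le_trans (Real.exp_pos _).le hl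
  have hx1 : 1 ≤ l * rr n := by
    have : Real.exp (bb n) * rr n = 1 := by
      unfold rr; rw [← Real.exp_add]; simp
    calc (1:ℝ) = Real.exp (bb n) * rr n := this.symm
    _ ≤ l * rr n := mul_le_mul_of_nonneg_right hl (rr_pos n).le
  have h1 : (l * rr n) / Real.exp 1 ≤ ff (l * rr n) := ff_ge_lin hx1
  calc Real.exp ((γ-1) * bb n - dd n - 1) * l
      = aa γ n * ((l * rr n) / Real.exp 1) := by
        unfold aa rr
        rw [div_eq_mul_inv, ← Real.exp_neg]
        rw [show Real.exp (γ * bb n - dd n) * (l * Real.exp (-bb n) * Real.exp (-1))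
            = Real.exp (γ * bb n - dd n) * Real.exp (-bb n) * Real.exp (-1) * l from by ring,
          ← Real.exp_add, ← Real.exp_add]
        ring_nf
  _ ≤ aa γ n * ff (l * rr n) := mul_le_mul_of_nonneg_left h1 (aa_pos γ n).le
  _ ≤ psi γ l := psi_lower_atom γ hγ2 hl0 n

lemma psi_lower_quad (γ : ℝ) (hγ2 : γ ≤ 2) {l : ℝ} (n : ℕ) (hl0 : 0 ≤ l)
    (hl : l ≤ Real.exp (bb (n+1))) :
    Real.exp ((γ-2) * bb (n+1) - dd (n+1) - 1) / 2 * l^2 ≤ psi γ l := by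
  have hx1 : l * rr (n+1) ≤ 1 := by
    have : Real.exp (bb (n+1)) * rr (n+1) = 1 := by
      unfold rr; rw [← Real.exp_add]; simp
    calc l * rr (n+1) ≤ Real.exp (bb (n+1)) * rr (n+1) :=
          mul_le_mul_of_nonneg_right hl (rr_pos _).le
    _ = 1 := this
  have hx0 : 0 ≤ l * rr (n+1) := mul_nonneg hl0 (rr_pos _).le
  have h1 : (l * rr (n+1))^2 / (2 * Real.exp 1) ≤ ff (l * rr (n+1)) := ff_ge_sq hx0 hx1
  calc Real.exp ((γ-2) * bb (n+1) - dd (n+1) - 1) / 2 * l^2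
      = aa γ (n+1) * ((l * rr (n+1))^2 / (2 * Real.exp 1)) := by
        have : aa γ (n+1) * ((l * rr (n+1))^2 / (2 * Real.exp 1))
            = (aa γ (n+1) * rr (n+1)^2) * Real.exp (-1) / 2 * l^2 := by
          rw [Real.exp_neg]
          field_simp
        rw [this, aa_rr_sq, ← Real.exp_add]
        ring_nf
  _ ≤ aa γ (n+1) * ff (l * rr (n+1)) := mul_le_mul_of_nonneg_left h1 (aa_pos γ _).le
  _ ≤ psi γ l := psi_lower_atom γ hγ2 hl0 (n+1)
lemma exp_div_sq (t u : ℝ) : Real.exp t / 2 * Real.exp u ^ 2 = Real.exp (t - Real.log 2 + 2*u) := by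
  have h : Real.exp (t - Real.log 2 + 2*u)
      = Real.exp t * (Real.exp (Real.log 2))⁻¹ * (Real.exp u * Real.exp u) := by
    rw [← Real.exp_neg, ← Real.exp_add, ← Real.exp_add, ← Real.exp_add]; ring_nf
  rw [h, Real.exp_log (by norm_num : (0:ℝ) < 2), pow_two]
  ring

lemma log_two_le_one : Real.log 2 ≤ 1 := by
  rw [Real.log_le_iff_le_exp (by norm_num)]
  linarith [Real.add_one_le_exp 1]

/-- Prop A : for 0 ≤ c < γ, psi γ l * l^(-c) → ∞ -/
lemma propA (γ : ℝ) (hγ1 : 1 < γ) (hγ2 : γ ≤ 2) (c : ℝ) (hc0 : 0 ≤ c) (hcγ : c < γ) :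
    Tendsto (fun l : ℝ => psi γ l * l ^ (-c)) atTop atTop := by
  -- uniform lower bound on each J_n
  have key : ∀ n : ℕ, ∀ l : ℝ, Real.exp (bb n) ≤ l → l ≤ Real.exp (bb (n+1)) →
      Real.exp ((γ-c) * bb n - 9 * dd n - 4) ≤ psi γ l * l ^ (-c) := by
    intro n l hl1 hl2
    have hl0 : (0:ℝ) < l := lt_of_lt_of_le (Real.exp_pos _) hl1
    have hL : bb n ≤ Real.log l := by
      rw [Real.le_log_iff_exp_le hl0]; exact hl1
    have hL2 : Real.log l ≤ bb (n+1) := by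
      rw [Real.log_le_iff_le_exp hl0]; exact hl2
    have hlc : l ^ (-c) = Real.exp (Real.log l * (-c)) := Real.rpow_def_of_pos hl0 _
    set L := Real.log l with hLdef
    have hexpl : l = Real.exp L := (Real.exp_log hl0).symm
    have hX := psi_lower_lin γ hγ2 n hl1
    set s1 : ℝ := (γ-1) * bb n - dd n - 1 with hs1
    rcases le_or_gt c 1 with hc1 | hc1
    · -- linear case
      have h1 : Real.exp (s1 + (1-c)*L) ≤ psi γ l * l ^ (-c) := by
        have : Real.exp s1 * l * l ^ (-c) ≤ psi γ l * l ^ (-c) :=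
          mul_le_mul_of_nonneg_right hX (Real.rpow_nonneg hl0.le _)
        refine le_trans (le_of_eq ?_) this
        rw [hlc, hexpl, ← Real.exp_add, ← Real.exp_add]
        ring_nf
      refine le_trans (Real.exp_le_exp.mpr ?_) h1
      have h2 : (1-c)*bb n ≤ (1-c)*L := mul_le_mul_of_nonneg_left hL (by linarith)
      have h3 : (γ-c) * bb n - 9*dd n - 4 ≤ s1 + (1-c)*bb n := by
        rw [hs1]
        have := dd_nonneg n
        nlinarith
      linarith
    · -- interpolation case
      have hYlow := psi_lower_quad γ hγ2 n hl0.le hl2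
      set s2 : ℝ := (γ-2) * bb (n+1) - dd (n+1) - 1 with hs2
      set X : ℝ := Real.exp s1 * l with hXdef
      set Y : ℝ := Real.exp s2 / 2 * l^2 with hYdef
      have hXpos : 0 < X := by positivity
      have hYpos : 0 < Y := by positivity
      have hpsipos : 0 < psi γ l := lt_of_lt_of_le hXpos hX
      have hc2 : c ≤ 2 := by linarith
      -- psi ≥ X^(2-c) * Y^(c-1)
      have hgm : X ^ (2-c) * Y ^ (c-1) ≤ psi γ l := by
        have g1 : X ^ (2-c) ≤ (psi γ l) ^ (2-c) :=
          Real.rpow_le_rpow hXpos.le hX (by linarith)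
        have g2 : Y ^ (c-1) ≤ (psi γ l) ^ (c-1) :=
          Real.rpow_le_rpow hYpos.le hYlow (by linarith)
        calc X ^ (2-c) * Y ^ (c-1) ≤ (psi γ l) ^ (2-c) * (psi γ l) ^ (c-1) :=
              mul_le_mul g1 g2 (Real.rpow_nonneg hYpos.le _) (Real.rpow_nonneg hpsipos.le _)
        _ = (psi γ l) ^ ((2-c) + (c-1)) := (Real.rpow_add hpsipos _ _).symm
        _ = psi γ l := by norm_num
      have h1 : X ^ (2-c) * Y ^ (c-1) * l ^ (-c) ≤ psi γ l * l ^ (-c) :=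
        mul_le_mul_of_nonneg_right hgm (Real.rpow_nonneg hl0.le _)
      refine le_trans ?_ h1
      -- compute X^(2-c) * Y^(c-1) * l^(-c) as exp of something
      have eX : X ^ (2-c) = Real.exp ((s1 + L) * (2-c)) := by
        rw [hXdef, hexpl, ← Real.exp_add, exp_rpow']
      have eY : Y ^ (c-1) = Real.exp ((s2 - Real.log 2 + 2*L) * (c-1)) := by
        rw [hYdef, hexpl, exp_div_sq, exp_rpow']
      rw [eX, eY, hlc, ← Real.exp_add, ← Real.exp_add]
      apply Real.exp_le_exp.mpr
      -- (s1+L)(2-c) + (s2 - log2 + 2L)(c-1) + L(-c) = (2-c)s1 + (c-1)s2 - (c-1)log2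
      have hL' : (s1 + L) * (2-c) + (s2 - Real.log 2 + 2*L) * (c-1) + L * (-c)
          = (2-c)*s1 + (c-1)*s2 - (c-1)*Real.log 2 := by ring
      rw [hL']
      -- now pure arithmetic on sequences
      have hdd1 : dd (n+1) ≤ 4 * dd n := by
        have h4 := dd_succ_le n
        have h5 : Real.sqrt ((n:ℝ)+1) ≤ (n:ℝ)+1 := by
          rw [show ((n:ℝ)+1) = Real.sqrt (((n:ℝ)+1)^2) from (Real.sqrt_sq (by positivity)).symm]
          nth_rewrite 1 [Real.sqrt_sq (by positivity)]
          exact Real.sqrt_le_sqrt (by nlinarith [Nat.cast_nonneg (α := ℝ) n])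
        have h6 := dd_ge n
        linarith
      have hbb1 : (γ-2) * bb (n+1) ≥ (γ-2) * bb n - 3 * dd n := by
        rw [bb_succ]
        have h7 : (2-γ) * (2*((n:ℝ)+1)+1) ≤ 3 * dd n := by
          have := dd_ge n
          have hn0 := Nat.cast_nonneg (α := ℝ) n
          nlinarith
        nlinarith
      have hlog := log_two_le_one
      have hddn := dd_nonneg n
      rw [hs1, hs2]
      nlinarith [dd_nonneg (n+1)]
  -- conclude via coverage and master
  rw [tendsto_atTop]
  intro M
  have h1 := (master_exp (γ-c) 9 4 (by linarith)).eventually_ge_atTop M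
  rw [eventually_atTop] at h1
  obtain ⟨N, hN⟩ := h1
  rw [eventually_atTop]
  refine ⟨Real.exp (bb N), fun l hl => ?_⟩
  obtain ⟨n, hnN, hn1, hn2⟩ := coverage N l hl
  exact le_trans (hN n hnN) (key n l hn1 hn2)

/-- Prop B : for c > γ, psi γ l * l^(-c) → 0 -/
lemma propB (γ : ℝ) (hγ1 : 1 < γ) (hγ2 : γ ≤ 2) (c : ℝ) (hcγ : γ < c) :
    Tendsto (fun l : ℝ => psi γ l * l ^ (-c)) atTop (nhds 0) := by
  have key : ∀ n : ℕ, ∀ l : ℝ, Real.exp (bb n) ≤ l → l ≤ Real.exp (bb (n+1)) →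
      psi γ l * l ^ (-c) ≤ 2 * Real.exp (-((c-γ) * bb n - dd n)) := by
    intro n l hl1 hl2
    have hl0 : (0:ℝ) < l := lt_of_lt_of_le (Real.exp_pos _) hl1
    have hL : bb n ≤ Real.log l := by rw [Real.le_log_iff_exp_le hl0]; exact hl1
    have hL2 : Real.log l ≤ bb (n+1) := by rw [Real.log_le_iff_le_exp hl0]; exact hl2
    have hlc : l ^ (-c) = Real.exp (Real.log l * (-c)) := Real.rpow_def_of_pos hl0 _
    set L := Real.log l with hLdef
    have hexpl : l = Real.exp L := (Real.exp_log hl0).symm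
    have hup := psi_upper γ (le_of_lt hγ1) hγ2 hl0.le n
    have hsplit : psi γ l * l ^ (-c)
        ≤ ((n:ℝ)+1) * Real.exp ((γ-1) * bb n) * l * l ^ (-c)
          + Real.exp ((γ-2) * bb (n+1) - dd (n+1)) * l^2 * l ^ (-c) := by
      have := mul_le_mul_of_nonneg_right hup (Real.rpow_nonneg hl0.le (-c))
      linarith [this]
    have hT1 : ((n:ℝ)+1) * Real.exp ((γ-1) * bb n) * l * l ^ (-c)
        ≤ Real.exp ((γ-c) * bb n + dd n) := by
      have e1 : Real.exp ((γ-1) * bb n) * l * l ^ (-c)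
          = Real.exp ((γ-1) * bb n + (1-c) * L) := by
        rw [hlc]; nth_rewrite 1 [hexpl]
        rw [← Real.exp_add, ← Real.exp_add]; ring_nf
      have e2 : ((n:ℝ)+1) ≤ Real.exp (dd n) := by
        calc ((n:ℝ)+1) ≤ dd n := dd_ge n
        _ ≤ Real.exp (dd n) := by linarith [Real.add_one_le_exp (dd n), dd_nonneg n]
      calc ((n:ℝ)+1) * Real.exp ((γ-1) * bb n) * l * l ^ (-c)
          = ((n:ℝ)+1) * (Real.exp ((γ-1) * bb n) * l * l ^ (-c)) := by ring
      _ = ((n:ℝ)+1) * Real.exp ((γ-1) * bb n + (1-c) * L) := by rw [e1]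
      _ ≤ Real.exp (dd n) * Real.exp ((γ-1) * bb n + (1-c) * L) := by
          apply mul_le_mul_of_nonneg_right e2 (Real.exp_pos _).le
      _ = Real.exp (dd n + (γ-1) * bb n + (1-c) * L) := by
          rw [← Real.exp_add]; ring_nf
      _ ≤ Real.exp ((γ-c) * bb n + dd n) := by
          apply Real.exp_le_exp.mpr
          have : (1-c) * L ≤ (1-c) * bb n := mul_le_mul_of_nonpos_left hL (by linarith)
          linarith
    have hT2 : Real.exp ((γ-2) * bb (n+1) - dd (n+1)) * l^2 * l ^ (-c)
        ≤ Real.exp ((γ-c) * bb n + dd n) := by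
      have e1 : Real.exp ((γ-2) * bb (n+1) - dd (n+1)) * l^2 * l ^ (-c)
          = Real.exp ((γ-2) * bb (n+1) - dd (n+1) + (2-c) * L) := by
        rw [hlc]; nth_rewrite 1 [hexpl]
        rw [← Real.exp_nat_mul, ← Real.exp_add, ← Real.exp_add]; push_cast; ring_nf
      rw [e1]
      apply Real.exp_le_exp.mpr
      have hbs := bb_succ n
      have hdd := dd_nonneg (n+1)
      have hddn := dd_nonneg n
      have hbn := bb_mono (Nat.le_succ n)
      rcases le_or_gt c 2 with hc2 | hc2
      · have h3 : (2-c) * L ≤ (2-c) * bb (n+1) := mul_le_mul_of_nonneg_left hL2 (by linarith)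
        have h4 : (γ-c) * bb (n+1) ≤ (γ-c) * bb n :=
          mul_le_mul_of_nonpos_left hbn (by linarith)
        nlinarith
      · have h3 : (2-c) * L ≤ (2-c) * bb n := mul_le_mul_of_nonpos_left hL (by linarith)
        have h4 : (γ-2) * bb (n+1) ≤ (γ-2) * bb n :=
          mul_le_mul_of_nonpos_left hbn (by linarith)
        nlinarith
    calc psi γ l * l ^ (-c) ≤ _ := hsplit
    _ ≤ 2 * Real.exp ((γ-c) * bb n + dd n) := by linarith
    _ = 2 * Real.exp (-((c-γ) * bb n - dd n)) := by ring_nf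
  -- conclude
  rw [NormedAddCommGroup.tendsto_nhds_zero]
  intro ε hε
  have h0 := master_exp0 (c-γ) 1 0 (by linarith)
  have h1 : Tendsto (fun n : ℕ => 2 * Real.exp (-((c-γ) * bb n - dd n))) atTop (nhds 0) := by
    have := h0.const_mul 2
    simp only [mul_zero] at this
    apply this.congr
    intro n; ring_nf
  have h2 := h1.eventually (eventually_lt_nhds hε)
  rw [eventually_atTop] at h2
  obtain ⟨N, hN⟩ := h2
  filter_upwards [eventually_ge_atTop (Real.exp (bb N))] with l hl
  obtain ⟨n, hnN, hn1, hn2⟩ := coverage N l hl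
  have hl0 : (0:ℝ) < l := lt_of_lt_of_le (Real.exp_pos _) hn1
  have hnn : 0 ≤ psi γ l * l ^ (-c) :=
    mul_nonneg (psi_nonneg γ hγ2 hl0.le) (Real.rpow_nonneg hl0.le _)
  rw [Real.norm_eq_abs, abs_of_nonneg hnn]
  exact lt_of_le_of_lt (key n l hn1 hn2) (hN n hnN)
lemma exp_combine3 (K x y : ℝ) : K * Real.exp x * Real.exp y = K * Real.exp (x+y) := by
  rw [mul_assoc, ← Real.exp_add]

lemma psi_ratio_mono (γ : ℝ) (hγ2 : γ ≤ 2) {u v : ℝ} (hu : 0 < u) (huv : u ≤ v) :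
    psi γ u * v ≤ psi γ v * u := by
  have hv : 0 < v := lt_of_lt_of_le hu huv
  have hsu := summable_main γ hγ2 u hu.le
  have hsv := summable_main γ hγ2 v hv.le
  rw [show psi γ u = ∑' n, aa γ n * ff (u * rr n) from rfl,
    show psi γ v = ∑' n, aa γ n * ff (v * rr n) from rfl,
    ← tsum_mul_right, ← tsum_mul_right]
  apply Summable.tsum_le_tsum _ (hsu.mul_right v) (hsv.mul_right u)
  intro n
  have h := ff_slope (mul_nonneg hu.le (rr_pos n).le)
    (mul_le_mul_of_nonneg_right huv (rr_pos n).le)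
  have h2 : ff (u * rr n) * v ≤ ff (v * rr n) * u := by
    have h3 : (ff (u * rr n) * v) * rr n ≤ (ff (v * rr n) * u) * rr n := by
      calc (ff (u * rr n) * v) * rr n = ff (u * rr n) * (v * rr n) := by ring
      _ ≤ ff (v * rr n) * (u * rr n) := h
      _ = (ff (v * rr n) * u) * rr n := by ring
    exact le_of_mul_le_mul_right h3 (rr_pos n)
  calc aa γ n * ff (u * rr n) * v = aa γ n * (ff (u * rr n) * v) := by ring
  _ ≤ aa γ n * (ff (v * rr n) * u) := mul_le_mul_of_nonneg_left h2 (aa_pos γ n).le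
  _ = aa γ n * ff (v * rr n) * u := by ring

lemma one_mem_S3 (γ : ℝ) (hγ2 : γ ≤ 2) {u v : ℝ} (hu : 1 ≤ u) (huv : u ≤ v) :
    1 * (psi γ u * u ^ (-(1:ℝ))) ≤ psi γ v * v ^ (-(1:ℝ)) := by
  have hu0 : (0:ℝ) < u := lt_of_lt_of_le zero_lt_one hu
  have hv0 : (0:ℝ) < v := lt_of_lt_of_le hu0 huv
  rw [one_mul, Real.rpow_neg_one, Real.rpow_neg_one,
    ← div_eq_mul_inv, ← div_eq_mul_inv, div_le_div_iff₀ hu0 hv0]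
  exact psi_ratio_mono γ hγ2 hu0 huv

lemma psi_upper_head (γ : ℝ) (hγ2 : γ ≤ 2) {l : ℝ} (hl : 0 ≤ l) (n : ℕ) :
    psi γ l ≤ (∑ k ∈ Finset.range (n+1), aa γ k * rr k) * l
      + Real.exp ((γ-2) * bb (n+1) - dd (n+1)) * l^2 := by
  have hsum := summable_main γ hγ2 l hl
  have hsplit := Summable.sum_add_tsum_nat_add (f := fun k => aa γ k * ff (l * rr k)) (n+1) hsum
  rw [show psi γ l = ∑' k, aa γ k * ff (l * rr k) from rfl, ← hsplit]
  have hhead : ∑ k ∈ Finset.range (n+1), aa γ k * ff (l * rr k)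
      ≤ (∑ k ∈ Finset.range (n+1), aa γ k * rr k) * l := by
    rw [Finset.sum_mul]
    apply Finset.sum_le_sum
    intro k _
    calc aa γ k * ff (l * rr k) ≤ aa γ k * (l * rr k) :=
          mul_le_mul_of_nonneg_left (ff_le_self (mul_nonneg hl (rr_pos k).le)) (aa_pos γ k).le
    _ = aa γ k * rr k * l := by ring
  have htail : ∑' i : ℕ, aa γ (i+(n+1)) * ff (l * rr (i+(n+1)))
      ≤ Real.exp ((γ-2) * bb (n+1) - dd (n+1)) * l^2 := by
    have hs1 : Summable (fun i : ℕ => aa γ (i+(n+1)) * ff (l * rr (i+(n+1)))) :=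
      (summable_nat_add_iff (n+1)).mpr hsum
    have hs2 : Summable (fun i : ℕ =>
        l^2/2 * Real.exp ((γ-2) * bb (n+1)) * Real.exp (-dd (i+(n+1)))) :=
      ((summable_nat_add_iff (n+1)).mpr summable_expdd).mul_left _
    have h1 : ∀ i : ℕ, aa γ (i+(n+1)) * ff (l * rr (i+(n+1)))
        ≤ l^2/2 * Real.exp ((γ-2) * bb (n+1)) * Real.exp (-dd (i+(n+1))) := by
      intro i
      calc aa γ (i+(n+1)) * ff (l * rr (i+(n+1)))
          ≤ aa γ (i+(n+1)) * ((l * rr (i+(n+1)))^2/2) :=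
            mul_le_mul_of_nonneg_left (ff_le_sq (mul_nonneg hl (rr_pos _).le)) (aa_pos γ _).le
      _ = l^2/2 * (aa γ (i+(n+1)) * rr (i+(n+1))^2) := by ring
      _ = l^2/2 * Real.exp ((γ-2) * bb (i+(n+1)) - dd (i+(n+1))) := by rw [aa_rr_sq]
      _ ≤ l^2/2 * Real.exp ((γ-2) * bb (n+1)) * Real.exp (-dd (i+(n+1))) := by
          rw [mul_assoc, ← Real.exp_add]
          apply mul_le_mul_of_nonneg_left _ (by positivity)
          apply Real.exp_le_exp.mpr
          have h2 : (γ-2) * bb (i+(n+1)) ≤ (γ-2) * bb (n+1) :=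
            mul_le_mul_of_nonpos_left (bb_mono (by omega)) (by linarith)
          linarith
    calc ∑' i : ℕ, aa γ (i+(n+1)) * ff (l * rr (i+(n+1)))
        ≤ ∑' i : ℕ, l^2/2 * Real.exp ((γ-2) * bb (n+1)) * Real.exp (-dd (i+(n+1))) :=
          Summable.tsum_le_tsum h1 hs1 hs2
    _ = l^2/2 * Real.exp ((γ-2) * bb (n+1)) * ∑' i : ℕ, Real.exp (-dd (i+(n+1))) := by
        rw [tsum_mul_left]
    _ ≤ l^2/2 * Real.exp ((γ-2) * bb (n+1)) * (2 * Real.exp (-dd (n+1))) := by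
        apply mul_le_mul_of_nonneg_left (tsum_tail n) (by positivity)
    _ = Real.exp ((γ-2) * bb (n+1) - dd (n+1)) * l^2 := by
        rw [Real.exp_sub, Real.exp_neg]
        field_simp
  linarith

lemma head_refined (γ : ℝ) (hγ1 : 1 < γ) : ∃ N₀ : ℕ, ∀ n, N₀ ≤ n →
    ∑ k ∈ Finset.range (n+1), aa γ k * rr k ≤ 3 * Real.exp ((γ-1) * bb n - dd n) := by
  set A : ℕ → ℝ := fun k => Real.exp ((γ-1) * bb k - dd k) with hA
  have hApos : ∀ k, 0 < A k := fun k => Real.exp_pos _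
  -- step 1 : ratio ≥ e eventually
  have hstep : ∀ᶠ k : ℕ in atTop, Real.exp 1 * A k ≤ A (k+1) := by
    filter_upwards [sqrt_tendsto.eventually_ge_atTop (2/(γ-1))] with k hk
    rw [hA]
    simp only
    rw [← Real.exp_add, Real.exp_le_exp]
    have h1 := dd_succ_le k
    have h2 := bb_succ k
    have h3 := sqrt_ge_one k
    have h4 : 2 ≤ (γ-1) * Real.sqrt ((k:ℝ)+1) := by
      rw [div_le_iff₀ (by linarith)] at hk
      linarith
    have h5 : Real.sqrt ((k:ℝ)+1) * Real.sqrt ((k:ℝ)+1) = (k:ℝ)+1 :=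
      Real.mul_self_sqrt (by positivity)
    have h6 : 4 * Real.sqrt ((k:ℝ)+1) ≤ (γ-1) * (2*((k:ℝ)+1)) := by
      nlinarith [mul_le_mul_of_nonneg_right h4
        (by positivity : (0:ℝ) ≤ 2 * Real.sqrt ((k:ℝ)+1)), h5]
    nlinarith
  rw [eventually_atTop] at hstep
  obtain ⟨K, hK⟩ := hstep
  -- step 2 : geometric sum bound for n ≥ K
  have hgeom : ∀ n, K ≤ n → ∑ k ∈ Finset.Icc K n, A k ≤ 2 * A n := by
    intro n hn
    induction n, hn using Nat.le_induction with
    | base =>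
      rw [Finset.Icc_self, Finset.sum_singleton]
      linarith [hApos K]
    | succ n hn ih =>
      rw [Finset.sum_Icc_succ_top (by omega : K ≤ n+1)]
      have h1 := hK n hn
      have h2 : Real.exp 1 ≥ 2 := by linarith [Real.add_one_le_exp 1]
      have h3 : 2 * A n ≤ A (n+1) := by nlinarith [hApos n]
      linarith [ih]
  -- step 3 : A n eventually ≥ the fixed initial sum
  have hAinf := master_exp (γ-1) 1 0 (by linarith)
  have hAeq : (fun n : ℕ => Real.exp ((γ-1) * bb n - 1 * dd n - 0)) = A := by
    funext n; rw [hA]; norm_num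
  rw [hAeq] at hAinf
  have hbig := hAinf.eventually_ge_atTop (∑ k ∈ Finset.range K, A k)
  rw [eventually_atTop] at hbig
  obtain ⟨N₁, hN₁⟩ := hbig
  refine ⟨max K N₁, fun n hn => ?_⟩
  have hKn : K ≤ n := le_trans (le_max_left _ _) hn
  have hN₁n : N₁ ≤ n := le_trans (le_max_right _ _) hn
  have hsplit : ∑ k ∈ Finset.range (n+1), aa γ k * rr k
      = ∑ k ∈ Finset.range K, A k + ∑ k ∈ Finset.Icc K n, A k := by
    have e1 : ∀ k, aa γ k * rr k = A k := fun k => aa_rr γ k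
    simp_rw [e1]
    rw [Finset.range_eq_Ico, ← Finset.sum_Ico_consecutive _ (Nat.zero_le K) (by omega),
      ← Finset.range_eq_Ico, Finset.Ico_add_one_right_eq_Icc]
  rw [hsplit]
  have := hN₁ n hN₁n
  have := hgeom n hKn
  linarith

lemma not_mem_S3 (γ : ℝ) (hγ1 : 1 < γ) (hγ2 : γ ≤ 2) (c : ℝ) (hc : 1 < c) (Q : ℝ) (hQ : 0 < Q) :
    ∃ u v : ℝ, 1 ≤ u ∧ u ≤ v ∧ ¬ (Q * (psi γ u * u ^ (-c)) ≤ psi γ v * v ^ (-c)) := by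
  obtain ⟨N₀, hN₀⟩ := head_refined γ hγ1
  -- choose n large
  have htend : Tendsto (fun n : ℕ => Real.exp (-((c-1) * Real.sqrt ((n:ℝ)+1)))) atTop (nhds 0) := by
    apply Real.tendsto_exp_atBot.comp
    apply tendsto_neg_atBot_iff.mpr
    exact sqrt_tendsto.const_mul_atTop (by linarith)
  have hsmall := htend.eventually (eventually_lt_nhds (show (0:ℝ) < Q * Real.exp (-1) / 4 by positivity))
  rw [eventually_atTop] at hsmall
  obtain ⟨N₁, hN₁⟩ := hsmall
  set n := max N₀ N₁ with hn
  have hnN₀ : N₀ ≤ n := le_max_left _ _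
  have hnN₁ : N₁ ≤ n := le_max_right _ _
  set sq : ℝ := Real.sqrt ((n:ℝ)+1) with hsq
  have hsq1 : 1 ≤ sq := sqrt_ge_one n
  set u : ℝ := Real.exp (bb n) with hu
  set v : ℝ := Real.exp (bb n + sq) with hv
  have hu1 : 1 ≤ u := by
    rw [hu]; rw [Real.one_le_exp_iff]; linarith [one_le_bb n]
  have huv : u ≤ v := by
    rw [hu, hv, Real.exp_le_exp]; linarith
  have hv0 : (0:ℝ) < v := Real.exp_pos _
  refine ⟨u, v, hu1, huv, ?_⟩
  push_neg
  set A : ℝ := Real.exp ((γ-1) * bb n - dd n) with hA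
  have hApos : (0:ℝ) < A := Real.exp_pos _
  -- upper bound for psi v
  have hupper : psi γ v ≤ 4 * A * v := by
    have h1 := psi_upper_head γ hγ2 (le_of_lt hv0) n
    have h2 := hN₀ n hnN₀
    have h3 : Real.exp ((γ-2) * bb (n+1) - dd (n+1)) * v^2 ≤ A * v := by
      have e1 : Real.exp ((γ-2) * bb (n+1) - dd (n+1)) * v ≤ A := by
        rw [hv, hA, ← Real.exp_add, Real.exp_le_exp]
        have g1 : (γ-2) * bb (n+1) ≤ (γ-2) * bb n :=
          mul_le_mul_of_nonpos_left (bb_mono (Nat.le_succ n)) (by linarith)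
        have g2 := dd_succ_ge n
        rw [← hsq] at g2
        linarith
      calc Real.exp ((γ-2) * bb (n+1) - dd (n+1)) * v^2
          = (Real.exp ((γ-2) * bb (n+1) - dd (n+1)) * v) * v := by ring
      _ ≤ A * v := mul_le_mul_of_nonneg_right e1 hv0.le
    have h4 : (∑ k ∈ Finset.range (n+1), aa γ k * rr k) * v ≤ 3 * A * v := by
      apply mul_le_mul_of_nonneg_right _ hv0.le
      rw [hA]; exact h2
    nlinarith
  -- now compare
  have hlow : Real.exp (-1) * A * u ≤ psi γ u := by
    have h := psi_lower_lin γ hγ2 n (le_of_eq hu.symm)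
    have e : Real.exp (-1) * A = Real.exp ((γ-1) * bb n - dd n - 1) := by
      rw [hA, ← Real.exp_add]
      congr 1
      ring
    rw [e]
    exact h
  have hvc : v ^ (-c) = Real.exp ((bb n + sq) * (-c)) := by rw [hv, exp_rpow']
  have huc : u ^ (-c) = Real.exp (bb n * (-c)) := by rw [hu, exp_rpow']
  have hRHS : psi γ v * v ^ (-c) ≤ 4 * A * Real.exp ((1-c) * (bb n + sq)) := by
    calc psi γ v * v ^ (-c) ≤ (4 * A * v) * v ^ (-c) :=
          mul_le_mul_of_nonneg_right hupper (Real.rpow_nonneg hv0.le _)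
    _ = 4 * A * Real.exp ((1-c) * (bb n + sq)) := by
        rw [hvc, hv, exp_combine3]
        congr 1
        ring
  have hLHS : Q * Real.exp (-1) * A * Real.exp ((1-c) * bb n) ≤ Q * (psi γ u * u ^ (-c)) := by
    have h5 : Real.exp (-1) * A * u * u ^ (-c) ≤ psi γ u * u ^ (-c) :=
      mul_le_mul_of_nonneg_right hlow (Real.rpow_nonneg (by positivity) _)
    have h6 : Real.exp (-1) * A * u * u ^ (-c) = Real.exp (-1) * A * Real.exp ((1-c) * bb n) := by
      rw [huc, hu, exp_combine3]
      congr 1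
      ring
    calc Q * Real.exp (-1) * A * Real.exp ((1-c) * bb n)
        = Q * (Real.exp (-1) * A * u * u ^ (-c)) := by rw [h6]; ring
    _ ≤ Q * (psi γ u * u ^ (-c)) := mul_le_mul_of_nonneg_left h5 hQ.le
  have hcmp : 4 * A * Real.exp ((1-c) * (bb n + sq)) < Q * Real.exp (-1) * A * Real.exp ((1-c) * bb n) := by
    have h7 := hN₁ n hnN₁
    rw [← hsq] at h7
    have e2 : Real.exp ((1-c) * (bb n + sq)) = Real.exp ((1-c) * bb n) * Real.exp (-((c-1) * sq)) := by
      rw [← Real.exp_add]; ring_nf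
    rw [e2]
    have h8 : 4 * Real.exp (-((c-1) * sq)) < Q * Real.exp (-1) := by
      have := mul_lt_mul_of_pos_left h7 (show (0:ℝ) < 4 by norm_num)
      calc 4 * Real.exp (-((c-1) * sq)) < 4 * (Q * Real.exp (-1) / 4) := this
      _ = Q * Real.exp (-1) := by ring
    calc 4 * A * (Real.exp ((1-c) * bb n) * Real.exp (-((c-1) * sq)))
        = (4 * Real.exp (-((c-1) * sq))) * (A * Real.exp ((1-c) * bb n)) := by ring
    _ < (Q * Real.exp (-1)) * (A * Real.exp ((1-c) * bb n)) := by
        apply mul_lt_mul_of_pos_right h8 (by positivity)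
    _ = Q * Real.exp (-1) * A * Real.exp ((1-c) * bb n) := by ring
  calc psi γ v * v ^ (-c) ≤ 4 * A * Real.exp ((1-c) * (bb n + sq)) := hRHS
  _ < Q * Real.exp (-1) * A * Real.exp ((1-c) * bb n) := hcmp
  _ ≤ Q * (psi γ u * u ^ (-c)) := hLHS
noncomputable def nu (γ : ℝ) : Measure ℝ :=
  Measure.sum (fun n => (ENNReal.ofReal (aa γ n)) • Measure.dirac (rr n))

lemma nu_Iic (γ : ℝ) : nu γ (Set.Iic 0) = 0 := by
  rw [nu, Measure.sum_apply _ measurableSet_Iic]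
  rw [ENNReal.tsum_eq_zero]
  intro n
  rw [Measure.smul_apply, Measure.dirac_apply' _ measurableSet_Iic]
  have : rr n ∉ Set.Iic (0:ℝ) := by
    simp only [Set.mem_Iic, not_le]
    exact rr_pos n
  rw [Set.indicator_of_notMem this]
  simp

lemma integrable_nu (γ : ℝ) (g : ℝ → ℝ) (hg : Measurable g)
    (hsum : Summable (fun n => aa γ n * ‖g (rr n)‖)) : Integrable g (nu γ) := by
  refine ⟨hg.aestronglyMeasurable, ?_⟩
  rw [HasFiniteIntegral, nu, lintegral_sum_measure]
  have heq : ∀ n : ℕ, ∫⁻ a, ‖g a‖ₑ ∂((ENNReal.ofReal (aa γ n)) • Measure.dirac (rr n))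
      = ENNReal.ofReal (aa γ n * ‖g (rr n)‖) := by
    intro n
    rw [lintegral_smul_measure, lintegral_dirac]
    rw [ENNReal.ofReal_mul (aa_pos γ n).le]
    congr 1
    exact (ofReal_norm _).symm
  rw [tsum_congr heq]
  rw [← ENNReal.ofReal_tsum_of_nonneg
    (fun n => mul_nonneg (aa_pos γ n).le (norm_nonneg _)) hsum]
  exact ENNReal.ofReal_lt_top

lemma integral_nu (γ : ℝ) (g : ℝ → ℝ) (hint : Integrable g (nu γ)) :
    ∫ r, g r ∂(nu γ) = ∑' n, aa γ n * g (rr n) := by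
  rw [nu] at hint ⊢
  rw [integral_sum_measure hint]
  apply tsum_congr
  intro n
  rw [integral_smul_measure, integral_dirac]
  rw [ENNReal.toReal_ofReal (aa_pos γ n).le]
  simp

lemma min_rr (n : ℕ) : min (rr n) (rr n ^ 2) = rr n ^ 2 := by
  have h1 := rr_pos n
  have h2 := rr_le_one n
  rw [min_eq_right]
  nlinarith

lemma integrable_min (γ : ℝ) (hγ2 : γ ≤ 2) :
    Integrable (fun r : ℝ => min r (r ^ 2)) (nu γ) := by
  apply integrable_nu γ (fun r : ℝ => min r (r ^ 2))
    ((continuous_id.min (continuous_pow 2)).measurable)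
  apply Summable.of_nonneg_of_le (fun n => mul_nonneg (aa_pos γ n).le (norm_nonneg _))
    (fun n => ?_) summable_expdd
  rw [min_rr, Real.norm_eq_abs, abs_of_nonneg (by positivity)]
  rw [aa_rr_sq]
  apply Real.exp_le_exp.mpr
  nlinarith [bb_nonneg n, one_le_bb n]

lemma psi_eq_integral (γ : ℝ) (hγ2 : γ ≤ 2) (l : ℝ) (hl : 0 ≤ l) :
    psi γ l = ∫ r, (Real.exp (-(l * r)) - 1 + l * r) ∂(nu γ) := by
  have hmeas : Measurable (fun r : ℝ => Real.exp (-(l * r)) - 1 + l * r) := by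
    apply Measurable.add
    · apply Measurable.sub
      · exact (Real.measurable_exp.comp ((measurable_const.mul measurable_id).neg))
      · exact measurable_const
    · exact measurable_const.mul measurable_id
  have hsum2 : Summable (fun n => aa γ n * ‖ff (l * rr n)‖) := by
    have : (fun n => aa γ n * ‖ff (l * rr n)‖) = fun n => aa γ n * ff (l * rr n) := by
      funext n
      rw [Real.norm_eq_abs, abs_of_nonneg (ff_nonneg _)]
    rw [this]
    exact summable_main γ hγ2 l hl
  have hint : Integrable (fun r : ℝ => Real.exp (-(l * r)) - 1 + l * r) (nu γ) := by
    apply integrable_nu γ _ hmeas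
    have : (fun n => aa γ n * ‖Real.exp (-(l * rr n)) - 1 + l * rr n‖)
        = fun n => aa γ n * ‖ff (l * rr n)‖ := by
      funext n; rfl
    rw [this]
    exact hsum2
  rw [integral_nu γ _ hint]
  rfl

lemma tendsto_conflict {f : ℝ → ℝ} (h1 : Tendsto f atTop atTop)
    (h2 : Tendsto f atTop (nhds 0)) : False := by
  have e1 := h1.eventually_ge_atTop 1
  have e2 := h2.eventually (eventually_lt_nhds (zero_lt_one))
  obtain ⟨l, hl1, hl2⟩ := (e1.and e2).exists
  linarith
/-- For any γ ∈ (1,2] there is a branching mechanism ψ of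
Lévy–Khintchine form with γ_ψ = η_ψ = γ but δ_ψ = 1. -/
theorem exists_branching_mechanism_delta_one (γ : ℝ) (hγ1 : 1 < γ) (hγ2 : γ ≤ 2) :
    ∃ ν : Measure ℝ, ν (Set.Iic 0) = 0 ∧
      Integrable (fun r => min r (r ^ 2)) ν ∧
      ∃ ψ : ℝ → ℝ,
        (∀ l : ℝ, 0 ≤ l → ψ l = ∫ r, (Real.exp (-(l * r)) - 1 + l * r) ∂ν) ∧
        -- lower exponent of ψ at infinity equals γ
        sSup {c : ℝ | 0 ≤ c ∧
          Tendsto (fun l : ℝ => ψ l * l ^ (-c)) atTop atTop} = γ ∧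
        -- upper exponent of ψ at infinity equals γ
        sInf {c : ℝ | 0 ≤ c ∧
          Tendsto (fun l : ℝ => ψ l * l ^ (-c)) atTop (nhds 0)} = γ ∧
        -- the exponent δ_ψ equals 1
        sSup {c : ℝ | 0 ≤ c ∧ ∃ Q : ℝ, 0 < Q ∧
          ∀ u v : ℝ, 1 ≤ u → u ≤ v →
            Q * (ψ u * u ^ (-c)) ≤ ψ v * v ^ (-c)} = 1 := by
  refine ⟨nu γ, nu_Iic γ, integrable_min γ hγ2, psi γ,
    fun l hl => psi_eq_integral γ hγ2 l hl, ?_, ?_, ?_⟩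
  · -- sSup S₁ = γ
    set S₁ := {c : ℝ | 0 ≤ c ∧ Tendsto (fun l : ℝ => psi γ l * l ^ (-c)) atTop atTop} with hS₁
    have h0S : (0:ℝ) ∈ S₁ := ⟨le_refl 0, propA γ hγ1 hγ2 0 (le_refl 0) (by linarith)⟩
    have hub : ∀ c ∈ S₁, c ≤ γ := by
      intro c hc
      by_contra hcon
      push_neg at hcon
      exact tendsto_conflict hc.2 (propB γ hγ1 hγ2 c hcon)
    have hbdd : BddAbove S₁ := ⟨γ, hub⟩
    apply le_antisymm (csSup_le ⟨0, h0S⟩ hub)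
    apply le_of_forall_pos_le_add
    intro ε hε
    rcases le_or_gt ε γ with h | h
    · have hmem : γ - ε ∈ S₁ := ⟨by linarith, propA γ hγ1 hγ2 (γ-ε) (by linarith) (by linarith)⟩
      linarith [le_csSup hbdd hmem]
    · linarith [le_csSup hbdd h0S]
  · -- sInf S₂ = γ
    set S₂ := {c : ℝ | 0 ≤ c ∧ Tendsto (fun l : ℝ => psi γ l * l ^ (-c)) atTop (nhds 0)} with hS₂
    have hmem : ∀ c : ℝ, γ < c → c ∈ S₂ :=
      fun c hc => ⟨by linarith, propB γ hγ1 hγ2 c hc⟩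
    have hlb : ∀ c ∈ S₂, γ ≤ c := by
      intro c hc
      by_contra hcon
      push_neg at hcon
      exact tendsto_conflict (propA γ hγ1 hγ2 c hc.1 hcon) hc.2
    apply le_antisymm
    · apply le_of_forall_pos_le_add
      intro ε hε
      linarith [csInf_le ⟨γ, hlb⟩ (hmem (γ+ε) (by linarith))]
    · exact le_csInf ⟨γ+1, hmem _ (by linarith)⟩ hlb
  · -- sSup S₃ = 1
    set S₃ := {c : ℝ | 0 ≤ c ∧ ∃ Q : ℝ, 0 < Q ∧ ∀ u v : ℝ, 1 ≤ u → u ≤ v →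
        Q * (psi γ u * u ^ (-c)) ≤ psi γ v * v ^ (-c)} with hS₃
    have h1S : (1:ℝ) ∈ S₃ :=
      ⟨zero_le_one, 1, zero_lt_one, fun u v hu huv => one_mem_S3 γ hγ2 hu huv⟩
    have hub : ∀ c ∈ S₃, c ≤ 1 := by
      intro c hc
      by_contra hcon
      push_neg at hcon
      obtain ⟨Q, hQ, hall⟩ := hc.2
      obtain ⟨u, v, hu, huv, hne⟩ := not_mem_S3 γ hγ1 hγ2 c hcon Q hQ
      exact hne (hall u v hu huv)
    exact le_antisymm (csSup_le ⟨1, h1S⟩ hub) (le_csSup ⟨1, hub⟩ h1S)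
end

section
/- Let ψ be a branching mechanism with δ = δ_ψ > 1 and define v: (0,∞) → (0,∞) by ∫_{v(a)}^∞ du/ψ(u) = a. Then there exist r₁, C₁ ∈ (0,∞), depending only on ψ, such that v(r) < C₁ r φ⁻¹(1/r) for all r ∈ (0, r₁), where φ = ψ' ∘ ψ⁻¹. -/
open MeasureTheory Real Set

lemma exp_aux1 (x : ℝ) : Real.exp (-x) * (1 + x) ≤ 1 := by
  have h := Real.add_one_le_exp x
  have hp := Real.exp_pos (-x)
  have h2 : Real.exp (-x) * Real.exp x = 1 := by
    rw [← Real.exp_add]; simp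
  nlinarith [hp.le]

lemma exp_aux0 (x : ℝ) : 1 - x ≤ Real.exp (-x) := by
  have := Real.add_one_le_exp (-x); linarith

lemma key_ineq (x : ℝ) (hx : 0 ≤ x) :
    2 * (1 - Real.exp (-x)) ≤ x * (1 + Real.exp (-x)) := by
  set h : ℝ → ℝ := fun y => y + y * Real.exp (-y) + 2 * Real.exp (-y) - 2 with hh
  have hd : ∀ y : ℝ, HasDerivAt h (1 - Real.exp (-y) - y * Real.exp (-y)) y := by
    intro y
    have he : HasDerivAt (fun y : ℝ => Real.exp (-y)) (-Real.exp (-y)) y := by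
      simpa using (hasDerivAt_neg y).exp
    have h1 : HasDerivAt (fun y : ℝ => y * Real.exp (-y))
        (1 * Real.exp (-y) + y * -Real.exp (-y)) y := (hasDerivAt_id y).mul he
    have := ((hasDerivAt_id y).add h1).add (he.const_mul 2) |>.sub_const 2
    refine this.congr_deriv ?_
    ring
  have hmono : MonotoneOn h (Set.Ici 0) := by
    apply monotoneOn_of_deriv_nonneg (convex_Ici 0)
    · exact (Continuous.continuousOn (by continuity))
    · intro y hy; exact (hd y).differentiableAt.differentiableWithinAt
    · intro y hy
      rw [(hd y).deriv]
      have h1 := exp_aux1 y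
      nlinarith [Real.exp_pos (-y)]
  have h0 : h 0 ≤ h x := hmono Set.self_mem_Ici hx hx
  simp only [hh] at h0
  simp at h0
  nlinarith [h0]


-- f(x) = e^{-x} - 1 + x bounds
lemma f_nonneg (x : ℝ) : 0 ≤ Real.exp (-x) - 1 + x := by
  have := exp_aux0 x; linarith

lemma f_le_x (x : ℝ) (hx : 0 ≤ x) : Real.exp (-x) - 1 + x ≤ x := by
  have : Real.exp (-x) ≤ 1 := by
    rw [Real.exp_le_one_iff]; linarith
  linarith

lemma f_le_sq (x : ℝ) (hx : 0 ≤ x) : Real.exp (-x) - 1 + x ≤ x ^ 2 := by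
  have h1 := exp_aux1 x
  have h0 := exp_aux0 x
  nlinarith [Real.exp_pos (-x)]

-- g(x) = x(1 - e^{-x}) bounds
lemma g_nonneg (x : ℝ) (hx : 0 ≤ x) : 0 ≤ x * (1 - Real.exp (-x)) := by
  have : Real.exp (-x) ≤ 1 := by rw [Real.exp_le_one_iff]; linarith
  nlinarith

lemma g_le_x (x : ℝ) (hx : 0 ≤ x) : x * (1 - Real.exp (-x)) ≤ x := by
  nlinarith [Real.exp_pos (-x)]

lemma g_le_sq (x : ℝ) (hx : 0 ≤ x) : x * (1 - Real.exp (-x)) ≤ x ^ 2 := by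
  have := exp_aux0 x; nlinarith

-- S2 pointwise: f(x) ≤ g(x)
lemma f_le_g (x : ℝ) (hx : 0 ≤ x) :
    Real.exp (-x) - 1 + x ≤ x * (1 - Real.exp (-x)) := by
  have := exp_aux1 x; nlinarith

-- S4 pointwise: g(x) ≤ 4 f(x)
lemma g_le_4f (x : ℝ) (hx : 0 ≤ x) :
    x * (1 - Real.exp (-x)) ≤ 4 * (Real.exp (-x) - 1 + x) := by
  have h2 := key_ineq x hx
  have ht : Real.exp (-x) ≤ 1 := by rw [Real.exp_le_one_iff]; linarith
  nlinarith

-- S1 pointwise: y(1-e^{-y}) ≤ e^{-2y} - 1 + 2y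
lemma g_le_f2 (y : ℝ) (hy : 0 ≤ y) :
    y * (1 - Real.exp (-y)) ≤ Real.exp (-(2*y)) - 1 + 2*y := by
  have h0 := exp_aux0 y
  have he : Real.exp (-(2*y)) = Real.exp (-y) * Real.exp (-y) := by
    rw [← Real.exp_add]; ring_nf
  rw [he]
  nlinarith [Real.exp_pos (-y)]


variable {ν : Measure ℝ}

lemma nu_ae_pos (hν0 : ν (Set.Iic 0) = 0) : ∀ᵐ r ∂ν, 0 < r := by
  rw [ae_iff]
  have : {r : ℝ | ¬ 0 < r} = Set.Iic 0 := by ext r; simp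
  rw [this]; exact hν0

lemma int_f (hν0 : ν (Set.Iic 0) = 0)
    (hνint : Integrable (fun r => min r (r ^ 2)) ν) (l : ℝ) (hl : 0 ≤ l) :
    Integrable (fun r => Real.exp (-(l * r)) - 1 + l * r) ν := by
  apply Integrable.mono' (hνint.const_mul (max l (l ^ 2)))
  · exact (Continuous.aestronglyMeasurable (by continuity))
  · filter_upwards [nu_ae_pos hν0] with r hr
    have hlr : 0 ≤ l * r := mul_nonneg hl hr.le
    rw [Real.norm_of_nonneg (f_nonneg _)]
    rcases le_total r 1 with h1 | h1
    · have : min r (r ^ 2) = r ^ 2 := min_eq_right (by nlinarith)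
      rw [this]
      calc Real.exp (-(l * r)) - 1 + l * r ≤ (l * r) ^ 2 := f_le_sq _ hlr
        _ = l ^ 2 * r ^ 2 := by ring
        _ ≤ max l (l ^ 2) * r ^ 2 := by
            apply mul_le_mul_of_nonneg_right (le_max_right _ _) (by positivity)
    · have : min r (r ^ 2) = r := min_eq_left (by nlinarith)
      rw [this]
      calc Real.exp (-(l * r)) - 1 + l * r ≤ l * r := f_le_x _ hlr
        _ ≤ max l (l ^ 2) * r := by
            apply mul_le_mul_of_nonneg_right (le_max_left _ _) hr.le

lemma g_bound (l r : ℝ) (hl : 0 ≤ l) (hr : 0 < r) :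
    r * (1 - Real.exp (-(l * r))) ≤ max 1 l * min r (r ^ 2) := by
  have hlr : 0 ≤ l * r := mul_nonneg hl hr.le
  have h0 : Real.exp (-(l*r)) ≤ 1 := by rw [Real.exp_le_one_iff]; linarith
  have h1 : 1 - Real.exp (-(l*r)) ≤ l * r := by have := exp_aux0 (l*r); linarith
  rcases le_total r 1 with hc | hc
  · have hm : min r (r ^ 2) = r ^ 2 := min_eq_right (by nlinarith)
    rw [hm]
    calc r * (1 - Real.exp (-(l * r))) ≤ r * (l * r) := by nlinarith
      _ = l * r ^ 2 := by ring
      _ ≤ max 1 l * r ^ 2 := mul_le_mul_of_nonneg_right (le_max_right _ _) (by positivity)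
  · have hm : min r (r ^ 2) = r := min_eq_left (by nlinarith)
    rw [hm]
    calc r * (1 - Real.exp (-(l * r))) ≤ r * 1 := by nlinarith [Real.exp_pos (-(l * r))]
      _ = r := by ring
      _ ≤ max 1 l * r := by nlinarith [le_max_left (1:ℝ) l]

lemma g_nonneg' (l r : ℝ) (hl : 0 ≤ l) (hr : 0 ≤ r) :
    0 ≤ r * (1 - Real.exp (-(l * r))) := by
  have h0 : Real.exp (-(l*r)) ≤ 1 := by
    rw [Real.exp_le_one_iff]; nlinarith
  nlinarith

lemma int_g (hν0 : ν (Set.Iic 0) = 0)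
    (hνint : Integrable (fun r => min r (r ^ 2)) ν) (l : ℝ) (hl : 0 ≤ l) :
    Integrable (fun r => r * (1 - Real.exp (-(l * r)))) ν := by
  apply Integrable.mono' (hνint.const_mul (max 1 l))
  · exact (Continuous.aestronglyMeasurable (by continuity))
  · filter_upwards [nu_ae_pos hν0] with r hr
    rw [Real.norm_of_nonneg (g_nonneg' l r hl hr.le)]
    exact g_bound l r hl hr

lemma deriv_int (hν0 : ν (Set.Iic 0) = 0)
    (hνint : Integrable (fun r => min r (r ^ 2)) ν) (l : ℝ) (hl : 0 < l) :
    HasDerivAt (fun x => ∫ r, (Real.exp (-(x * r)) - 1 + x * r) ∂ν)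
      (∫ r, r * (1 - Real.exp (-(l * r))) ∂ν) l := by
  have key := hasDerivAt_integral_of_dominated_loc_of_deriv_le
    (F := fun x r => Real.exp (-(x * r)) - 1 + x * r)
    (F' := fun x r => r * (1 - Real.exp (-(x * r))))
    (x₀ := l) (bound := fun r => max 1 (2 * l) * min r (r ^ 2)) (μ := ν)
    (Metric.ball_mem_nhds l (half_pos hl))
    (Filter.Eventually.of_forall fun x => Continuous.aestronglyMeasurable (by continuity))
    (int_f hν0 hνint l hl.le)
    (Continuous.aestronglyMeasurable (by continuity))
    ?_ (hνint.const_mul _) ?_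
  · exact key.2
  · filter_upwards [nu_ae_pos hν0] with r hr
    intro x hx
    rw [Metric.mem_ball, Real.dist_eq, abs_lt] at hx
    have hx0 : 0 ≤ x := by linarith
    have hx2 : x ≤ 2 * l := by linarith
    rw [Real.norm_of_nonneg (g_nonneg' x r hx0 hr.le)]
    calc r * (1 - Real.exp (-(x * r))) ≤ max 1 x * min r (r ^ 2) := g_bound x r hx0 hr
      _ ≤ max 1 (2 * l) * min r (r ^ 2) := by
          apply mul_le_mul_of_nonneg_right (max_le_max le_rfl hx2)
          have : (0:ℝ) < min r (r^2) := by
            rcases le_total r 1 with h|h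
            · rw [min_eq_right (by nlinarith)]; positivity
            · rw [min_eq_left (by nlinarith)]; positivity
          linarith
  · filter_upwards with r
    intro x _
    have h1 : HasDerivAt (fun x : ℝ => -(x * r)) (-r) x := by
      exact ((hasDerivAt_id x).mul_const r).neg.congr_deriv (by ring)
    have h2 := h1.exp
    have h3 := (h2.sub_const 1).add ((hasDerivAt_id x).mul_const r)
    refine h3.congr_deriv ?_
    ring


variable {ν : Measure ℝ} {α β : ℝ} {ψ ψ' : ℝ → ℝ}

lemma psi_deriv (hν0 : ν (Set.Iic 0) = 0)
    (hνint : Integrable (fun r => min r (r ^ 2)) ν)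
    (hψ : ∀ l : ℝ, 0 ≤ l →
      ψ l = α * l + β * l ^ 2 + ∫ r, (Real.exp (-(l * r)) - 1 + l * r) ∂ν)
    (l : ℝ) (hl : 0 < l) :
    HasDerivAt ψ (α + 2 * β * l + ∫ r, r * (1 - Real.exp (-(l * r))) ∂ν) l := by
  have h1 : HasDerivAt (fun x : ℝ => α * x) α l := by
    simpa using (hasDerivAt_id l).const_mul α
  have h2 : HasDerivAt (fun x : ℝ => β * x ^ 2) (2 * β * l) l := by
    have := (hasDerivAt_pow 2 l).const_mul β
    refine this.congr_deriv ?_; ring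
  have h3 := (h1.add h2).add (deriv_int hν0 hνint l hl)
  apply h3.congr_of_eventuallyEq
  filter_upwards [isOpen_Ioi.mem_nhds hl] with x hx
  exact hψ x (le_of_lt hx)

lemma psi'_eq (hν0 : ν (Set.Iic 0) = 0)
    (hνint : Integrable (fun r => min r (r ^ 2)) ν)
    (hψ : ∀ l : ℝ, 0 ≤ l →
      ψ l = α * l + β * l ^ 2 + ∫ r, (Real.exp (-(l * r)) - 1 + l * r) ∂ν)
    (hderiv : ∀ l : ℝ, 0 < l → HasDerivAt ψ (ψ' l) l)
    (l : ℝ) (hl : 0 < l) :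
    ψ' l = α + 2 * β * l + ∫ r, r * (1 - Real.exp (-(l * r))) ∂ν :=
  (hderiv l hl).unique (psi_deriv hν0 hνint hψ l hl)

lemma psi_pos_or (hα : 0 ≤ α) (hβ : 0 ≤ β) (hν0 : ν (Set.Iic 0) = 0)
    (hνint : Integrable (fun r => min r (r ^ 2)) ν)
    (hψ : ∀ l : ℝ, 0 ≤ l →
      ψ l = α * l + β * l ^ 2 + ∫ r, (Real.exp (-(l * r)) - 1 + l * r) ∂ν) :
    (∀ l, 0 < l → 0 < ψ l) ∨ (∀ u, 0 ≤ u → ψ u = 0) := by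
  have hint_nonneg : ∀ l : ℝ, 0 ≤ l → 0 ≤ ∫ r, (Real.exp (-(l * r)) - 1 + l * r) ∂ν := by
    intro l _
    exact integral_nonneg fun r => f_nonneg _
  by_cases hcase : α = 0 ∧ β = 0
  case neg =>
    left
    intro l hl
    rw [hψ l hl.le]
    have h := hint_nonneg l hl.le
    rcases hα.lt_or_eq with h1 | h1
    · nlinarith
    · rcases hβ.lt_or_eq with h2 | h2
      · nlinarith [mul_pos h2 (pow_pos hl 2)]
      · exact absurd ⟨h1.symm, h2.symm⟩ hcase
  · obtain ⟨ha, hb⟩ := hcase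
    by_cases hz : ν Set.univ = 0
    · right
      have hν : ν = 0 := Measure.measure_univ_eq_zero.mp hz
      intro u hu
      rw [hψ u hu, ha, hb, hν]
      simp
    · left
      intro l hl
      rw [hψ l hl.le, ha, hb]
      simp only [zero_mul, zero_add]
      rcases (hint_nonneg l hl.le).lt_or_eq with h | h
      · linarith
      · exfalso
        have hfi := int_f hν0 hνint l hl.le
        have h0 : (fun r => Real.exp (-(l * r)) - 1 + l * r) =ᵐ[ν] 0 := by
          rw [← integral_eq_zero_iff_of_nonneg_ae
            (Filter.Eventually.of_forall fun r => f_nonneg _) hfi]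
          exact h.symm
        have : ∀ᵐ r ∂ν, False := by
          filter_upwards [h0, nu_ae_pos hν0] with r h1 h2
          have hlr : l * r ≠ 0 := by positivity
          have := Real.add_one_lt_exp (x := -(l * r)) (by simpa using hlr)
          simp only [Pi.zero_apply] at h1
          linarith
        apply hz
        simpa [ae_iff] using this

lemma psi_S2 (hν0 : ν (Set.Iic 0) = 0)
    (hνint : Integrable (fun r => min r (r ^ 2)) ν)
    (hα : 0 ≤ α) (hβ : 0 ≤ β)
    (hψ : ∀ l : ℝ, 0 ≤ l →
      ψ l = α * l + β * l ^ 2 + ∫ r, (Real.exp (-(l * r)) - 1 + l * r) ∂ν)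
    (hderiv : ∀ l : ℝ, 0 < l → HasDerivAt ψ (ψ' l) l)
    (l : ℝ) (hl : 0 < l) : ψ l ≤ l * ψ' l := by
  rw [hψ l hl.le, psi'_eq hν0 hνint hψ hderiv l hl]
  have hint : (∫ r, (Real.exp (-(l * r)) - 1 + l * r) ∂ν)
      ≤ ∫ r, l * (r * (1 - Real.exp (-(l * r)))) ∂ν := by
    apply integral_mono_ae (int_f hν0 hνint l hl.le) ((int_g hν0 hνint l hl.le).const_mul l)
    filter_upwards [nu_ae_pos hν0] with r hr
    have := f_le_g (l * r) (by positivity)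
    calc Real.exp (-(l * r)) - 1 + l * r ≤ (l*r) * (1 - Real.exp (-(l * r))) := this
      _ = l * (r * (1 - Real.exp (-(l * r)))) := by ring
  rw [integral_const_mul] at hint
  nlinarith [hint, mul_nonneg hβ (sq_nonneg l)]

lemma psi_S4 (hν0 : ν (Set.Iic 0) = 0)
    (hνint : Integrable (fun r => min r (r ^ 2)) ν)
    (hα : 0 ≤ α) (hβ : 0 ≤ β)
    (hψ : ∀ l : ℝ, 0 ≤ l →
      ψ l = α * l + β * l ^ 2 + ∫ r, (Real.exp (-(l * r)) - 1 + l * r) ∂ν)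
    (hderiv : ∀ l : ℝ, 0 < l → HasDerivAt ψ (ψ' l) l)
    (l : ℝ) (hl : 0 < l) : l * ψ' l ≤ 4 * ψ l := by
  rw [hψ l hl.le, psi'_eq hν0 hνint hψ hderiv l hl]
  have hint : (∫ r, l * (r * (1 - Real.exp (-(l * r)))) ∂ν)
      ≤ ∫ r, 4 * (Real.exp (-(l * r)) - 1 + l * r) ∂ν := by
    apply integral_mono_ae ((int_g hν0 hνint l hl.le).const_mul l)
      ((int_f hν0 hνint l hl.le).const_mul 4)
    filter_upwards [nu_ae_pos hν0] with r hr
    have := g_le_4f (l * r) (by positivity)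
    calc l * (r * (1 - Real.exp (-(l * r)))) = (l*r) * (1 - Real.exp (-(l * r))) := by ring
      _ ≤ 4 * (Real.exp (-(l * r)) - 1 + l * r) := this
  rw [integral_const_mul, integral_const_mul] at hint
  nlinarith [hint, mul_nonneg hα hl.le, mul_nonneg hβ (sq_nonneg l)]

lemma psi_S1 (hν0 : ν (Set.Iic 0) = 0)
    (hνint : Integrable (fun r => min r (r ^ 2)) ν)
    (hα : 0 ≤ α) (hβ : 0 ≤ β)
    (hψ : ∀ l : ℝ, 0 ≤ l →
      ψ l = α * l + β * l ^ 2 + ∫ r, (Real.exp (-(l * r)) - 1 + l * r) ∂ν)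
    (hderiv : ∀ l : ℝ, 0 < l → HasDerivAt ψ (ψ' l) l)
    (l : ℝ) (hl : 0 < l) : (l / 2) * ψ' (l / 2) ≤ ψ l := by
  rw [hψ l hl.le, psi'_eq hν0 hνint hψ hderiv (l/2) (by linarith)]
  have hint : (∫ r, (l/2) * (r * (1 - Real.exp (-(l/2 * r)))) ∂ν)
      ≤ ∫ r, (Real.exp (-(l * r)) - 1 + l * r) ∂ν := by
    apply integral_mono_ae ((int_g hν0 hνint (l/2) (by linarith)).const_mul (l/2))
      (int_f hν0 hνint l hl.le)
    filter_upwards [nu_ae_pos hν0] with r hr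
    have hy : 0 ≤ l/2 * r := by positivity
    have := g_le_f2 (l/2 * r) hy
    have he : -(2 * (l/2 * r)) = -(l * r) := by ring
    have h2 : 2 * (l/2 * r) = l * r := by ring
    rw [he, h2] at this
    calc (l/2) * (r * (1 - Real.exp (-(l/2 * r))))
        = (l/2 * r) * (1 - Real.exp (-(l/2 * r))) := by ring
      _ ≤ Real.exp (-(l * r)) - 1 + l * r := this
  rw [integral_const_mul] at hint
  nlinarith [hint, mul_nonneg hα hl.le, mul_nonneg hβ (sq_nonneg l)]

lemma psi_S3 (hν0 : ν (Set.Iic 0) = 0)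
    (hνint : Integrable (fun r => min r (r ^ 2)) ν)
    (hβ : 0 ≤ β)
    (hψ : ∀ l : ℝ, 0 ≤ l →
      ψ l = α * l + β * l ^ 2 + ∫ r, (Real.exp (-(l * r)) - 1 + l * r) ∂ν)
    (hderiv : ∀ l : ℝ, 0 < l → HasDerivAt ψ (ψ' l) l)
    (a b : ℝ) (ha : 0 < a) (hab : a ≤ b) : ψ' a ≤ ψ' b := by
  have hb : 0 < b := lt_of_lt_of_le ha hab
  rw [psi'_eq hν0 hνint hψ hderiv a ha, psi'_eq hν0 hνint hψ hderiv b hb]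
  have hint : (∫ r, r * (1 - Real.exp (-(a * r))) ∂ν)
      ≤ ∫ r, r * (1 - Real.exp (-(b * r))) ∂ν := by
    apply integral_mono_ae (int_g hν0 hνint a ha.le) (int_g hν0 hνint b hb.le)
    filter_upwards [nu_ae_pos hν0] with r hr
    have : Real.exp (-(b * r)) ≤ Real.exp (-(a * r)) := by
      apply Real.exp_le_exp.mpr; nlinarith
    nlinarith
  nlinarith [hint, mul_nonneg hβ (sub_nonneg.mpr hab)]


variable {ψ : ℝ → ℝ} {c Q : ℝ}

lemma PL' (hPL : ∀ u w : ℝ, 1 ≤ u → u ≤ w → Q * (ψ u * u ^ (-c)) ≤ ψ w * w ^ (-c))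
    (u w : ℝ) (hu : 1 ≤ u) (huw : u ≤ w) : Q * ψ u * w ^ c ≤ ψ w * u ^ c := by
  have hu0 : (0:ℝ) < u := lt_of_lt_of_le one_pos hu
  have hw0 : (0:ℝ) < w := lt_of_lt_of_le hu0 huw
  have huc : (0:ℝ) < u ^ c := Real.rpow_pos_of_pos hu0 c
  have hwc : (0:ℝ) < w ^ c := Real.rpow_pos_of_pos hw0 c
  have h := hPL u w hu huw
  rw [Real.rpow_neg hu0.le, Real.rpow_neg hw0.le] at h
  have h5 := mul_le_mul_of_nonneg_right h (mul_pos huc hwc).le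
  calc Q * ψ u * w ^ c = Q * (ψ u * (u ^ c)⁻¹) * (u ^ c * w ^ c) := by
        field_simp
      _ ≤ ψ w * (w ^ c)⁻¹ * (u ^ c * w ^ c) := h5
      _ = ψ w * u ^ c := by field_simp

lemma tail_bound (hψpos : ∀ l : ℝ, 0 < l → 0 < ψ l)
    (hext : IntegrableOn (fun u => 1 / ψ u) (Set.Ioi 1))
    (hc1 : 1 < c) (hQ0 : 0 < Q)
    (hPL : ∀ u w : ℝ, 1 ≤ u → u ≤ w → Q * (ψ u * u ^ (-c)) ≤ ψ w * w ^ (-c))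
    (a : ℝ) (ha : 1 ≤ a) :
    (∫ u in Set.Ioi a, 1 / ψ u) ≤ a / ((c - 1) * Q * ψ a) := by
  have ha0 : (0:ℝ) < a := lt_of_lt_of_le one_pos ha
  have hψa : 0 < ψ a := hψpos a ha0
  have hmono : ∀ u ∈ Set.Ioi a, 1 / ψ u ≤ (a ^ c / (Q * ψ a)) * u ^ (-c) := by
    intro u hu
    have hau : a ≤ u := le_of_lt hu
    have hu0 : (0:ℝ) < u := lt_of_lt_of_le ha0 hau
    have hψu : 0 < ψ u := hψpos u hu0
    have huc : (0:ℝ) < u ^ c := Real.rpow_pos_of_pos hu0 c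
    have hac : (0:ℝ) < a ^ c := Real.rpow_pos_of_pos ha0 c
    have key := PL' hPL a u ha hau
    rw [Real.rpow_neg hu0.le]
    have h2 : (0:ℝ) < Q * ψ a * u ^ c := by positivity
    rw [div_le_iff₀ hψu, show a ^ c / (Q * ψ a) * (u ^ c)⁻¹ * ψ u
        = (a ^ c * ψ u) / (Q * ψ a * u ^ c) by field_simp, le_div_iff₀ h2]
    nlinarith
  have hint_rhs : IntegrableOn (fun u => (a ^ c / (Q * ψ a)) * u ^ (-c)) (Set.Ioi a) :=
    (integrableOn_Ioi_rpow_of_lt (by linarith) ha0).const_mul _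
  have hint_lhs : IntegrableOn (fun u => 1 / ψ u) (Set.Ioi a) :=
    hext.mono_set (Set.Ioi_subset_Ioi ha)
  have h1 : (∫ u in Set.Ioi a, 1 / ψ u)
      ≤ ∫ u in Set.Ioi a, (a ^ c / (Q * ψ a)) * u ^ (-c) :=
    setIntegral_mono_on hint_lhs hint_rhs measurableSet_Ioi hmono
  have h2 : (∫ u in Set.Ioi a, (a ^ c / (Q * ψ a)) * u ^ (-c))
      = (a ^ c / (Q * ψ a)) * ∫ u in Set.Ioi a, u ^ (-c) := integral_const_mul _ _
  have h3 : (∫ u in Set.Ioi a, u ^ (-c)) = -a ^ (-c + 1) / (-c + 1) :=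
    integral_Ioi_rpow_of_lt (by linarith) ha0
  have h4 : a ^ c * a ^ (-c + 1) = a := by
    rw [← Real.rpow_add ha0]
    norm_num
  rw [h2, h3] at h1
  refine h1.trans (le_of_eq ?_)
  have hne1 : Q * ψ a * (-c + 1) ≠ 0 := by
    have : -c + 1 ≠ 0 := by intro h; linarith
    positivity
  have hne2 : (c - 1) * Q * ψ a ≠ 0 := by
    have : c - 1 ≠ 0 := by intro h; linarith
    positivity
  calc a ^ c / (Q * ψ a) * (-a ^ (-c + 1) / (-c + 1))
      = (a ^ c * -a ^ (-c + 1)) / (Q * ψ a * (-c + 1)) := div_mul_div_comm _ _ _ _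
    _ = (-a) / (Q * ψ a * (-c + 1)) := by rw [mul_neg, h4]
    _ = a / ((c - 1) * Q * ψ a) := by
        rw [div_eq_div_iff hne1 hne2]; ring


variable {ψ : ℝ → ℝ}

lemma pos_int (hψpos : ∀ l : ℝ, 0 < l → 0 < ψ l)
    (hext : IntegrableOn (fun u => 1 / ψ u) (Set.Ioi 1))
    (B : ℝ) (hB : 1 ≤ B) : 0 < ∫ u in Set.Ioi B, 1 / ψ u := by
  have hB0 : (0:ℝ) < B := lt_of_lt_of_le one_pos hB
  have h1 : IntegrableOn (fun u => 1 / ψ u) (Set.Ioi B) :=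
    hext.mono_set (Set.Ioi_subset_Ioi hB)
  have hII : IntervalIntegrable (fun u => 1 / ψ u) volume B (B + 1) := by
    rw [intervalIntegrable_iff_integrableOn_Ioc_of_le (by linarith)]
    exact h1.mono_set Set.Ioc_subset_Ioi_self
  have h2 : (0:ℝ) < ∫ u in B..(B + 1), 1 / ψ u := by
    apply intervalIntegral.intervalIntegral_pos_of_pos_on hII _ (by linarith)
    intro x hx
    have : 0 < ψ x := hψpos x (by linarith [hx.1])
    positivity
  have h3 : (∫ u in B..(B + 1), 1 / ψ u) = ∫ u in Set.Ioc B (B + 1), 1 / ψ u :=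
    intervalIntegral.integral_of_le (by linarith)
  have h4 : (∫ u in Set.Ioc B (B + 1), 1 / ψ u) ≤ ∫ u in Set.Ioi B, 1 / ψ u := by
    apply setIntegral_mono_set h1 _ (HasSubset.Subset.eventuallyLE Set.Ioc_subset_Ioi_self)
    filter_upwards [ae_restrict_mem measurableSet_Ioi] with u hu
    have : 0 < ψ u := hψpos u (by linarith [Set.mem_Ioi.mp hu])
    positivity
  linarith [h3 ▸ h2]

lemma v_lower {v : ℝ → ℝ} (hψpos : ∀ l : ℝ, 0 < l → 0 < ψ l)
    (hv : ∀ a : ℝ, 0 < a → 0 < v a ∧ (∫ u in Set.Ioi (v a), 1 / ψ u) = a)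
    (r B : ℝ) (hr : 0 < r) (hB : 1 ≤ B)
    (hrB : r < ∫ u in Set.Ioi B, 1 / ψ u) : B < v r := by
  by_contra hle
  push_neg at hle
  obtain ⟨hv0, hv2⟩ := hv r hr
  have hint : IntegrableOn (fun u => 1 / ψ u) (Set.Ioi (v r)) := by
    by_contra h
    rw [MeasureTheory.integral_undef h] at hv2
    linarith
  have : (∫ u in Set.Ioi B, 1 / ψ u) ≤ ∫ u in Set.Ioi (v r), 1 / ψ u := by
    apply setIntegral_mono_set hint _ (HasSubset.Subset.eventuallyLE (Set.Ioi_subset_Ioi hle))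
    filter_upwards [ae_restrict_mem measurableSet_Ioi] with u hu
    have : 0 < ψ u := hψpos u (lt_trans hv0 (Set.mem_Ioi.mp hu))
    positivity
  rw [hv2] at this
  linarith
set_option maxHeartbeats 2000000 in
/-- Lemma: control of v by the gauge: if δ_ψ > 1, then there exist
r₁, C₁ > 0 with v(r) < C₁ r φ⁻¹(1/r) for all r ∈ (0, r₁), where v is determined by
∫_{v(a)}^∞ du/ψ(u) = a and φ = ψ' ∘ ψ⁻¹. -/

theorem control_v_by_gauge (α β : ℝ) (hα : 0 ≤ α) (hβ : 0 ≤ β)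
    (ν : Measure ℝ) (hν0 : ν (Set.Iic 0) = 0)
    (hνint : Integrable (fun r => min r (r ^ 2)) ν)
    (ψ ψ' ψinv φinv v : ℝ → ℝ)
    (hψ : ∀ l : ℝ, 0 ≤ l →
      ψ l = α * l + β * l ^ 2 + ∫ r, (Real.exp (-(l * r)) - 1 + l * r) ∂ν)
    (hext : IntegrableOn (fun u => 1 / ψ u) (Set.Ioi 1))
    (hderiv : ∀ l : ℝ, 0 < l → HasDerivAt ψ (ψ' l) l)
    (hinvpos : ∀ l : ℝ, 0 < l → 0 < ψinv l)
    (hinv₁ : ∀ l : ℝ, 0 ≤ l → ψ (ψinv l) = l)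
    (hinv₂ : ∀ l : ℝ, 0 ≤ l → ψinv (ψ l) = l)
    (hφinv₁ : ∀ x : ℝ, α ≤ x → 0 ≤ φinv x ∧ ψ' (ψinv (φinv x)) = x)
    (hφinv₂ : ∀ l : ℝ, 0 ≤ l → φinv (ψ' (ψinv l)) = l)
    -- δ > 1
    (hδ : 1 < sSup {c : ℝ | 0 ≤ c ∧ ∃ Q : ℝ, 0 < Q ∧
      ∀ u w : ℝ, 1 ≤ u → u ≤ w → Q * (ψ u * u ^ (-c)) ≤ ψ w * w ^ (-c)})
    -- v : (0,∞) → (0,∞) is determined by ∫_{v(a)}^∞ du/ψ(u) = a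
    (hv : ∀ a : ℝ, 0 < a → 0 < v a ∧ (∫ u in Set.Ioi (v a), 1 / ψ u) = a) :
    ∃ r₁ : ℝ, 0 < r₁ ∧ ∃ C₁ : ℝ, 0 < C₁ ∧
      ∀ r : ℝ, 0 < r → r < r₁ → v r < C₁ * (r * φinv (1 / r)) := by
  -- basic facts
  have hψ0 : ψ 0 = 0 := by rw [hψ 0 le_rfl]; simp
  have hψinv0 : ψinv 0 = 0 := by have h := hinv₂ 0 le_rfl; rwa [hψ0] at h
  -- positivity of ψ on (0,∞)
  have hψpos : ∀ l : ℝ, 0 < l → 0 < ψ l := by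
    rcases psi_pos_or hα hβ hν0 hνint hψ with h | h
    · exact h
    · exfalso
      obtain ⟨hv1, hv2⟩ := hv 1 one_pos
      have hz : (∫ u in Set.Ioi (v 1), 1 / ψ u) = 0 := by
        rw [setIntegral_congr_fun measurableSet_Ioi
          (g := fun _ : ℝ => (0:ℝ)) ?_]
        · simp
        · intro u hu
          have hu0 : ψ u = 0 := h u (le_of_lt (lt_trans hv1 hu))
          simp [hu0]
      rw [hz] at hv2
      linarith
  -- extract c and Q from hδ
  have hSne : {c : ℝ | 0 ≤ c ∧ ∃ Q : ℝ, 0 < Q ∧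
      ∀ u w : ℝ, 1 ≤ u → u ≤ w → Q * (ψ u * u ^ (-c)) ≤ ψ w * w ^ (-c)}.Nonempty := by
    by_contra h
    rw [Set.not_nonempty_iff_eq_empty] at h
    rw [h, Real.sSup_empty] at hδ
    linarith
  obtain ⟨c, ⟨hc0, Q, hQ0, hPL⟩, hc1⟩ := exists_lt_of_lt_csSup hSne hδ
  have hc1' : (0:ℝ) < c - 1 := by linarith
  -- ψ' 0 is bounded by ψ' 1 (Darboux argument)
  have hx₀le : ψ' 0 ≤ ψ' 1 := by
    by_contra hgt
    push_neg at hgt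
    have hψ1 : 0 < ψ 1 := hψpos 1 one_pos
    set Y := (|ψ' 0| + 1) / (Q * ψ 1) with hY
    have hY0 : 0 < Y := by positivity
    set L := max 2 (Y ^ (1 / (c - 1))) with hL
    have hL2 : (2:ℝ) ≤ L := le_max_left _ _
    have hL0 : (0:ℝ) < L := by linarith
    have hYL : Y ≤ L ^ (c - 1) := by
      have h1 : Y ^ (1 / (c - 1)) ≤ L := le_max_right _ _
      have h2 := Real.rpow_le_rpow (Real.rpow_nonneg hY0.le _) h1 (by linarith : (0:ℝ) ≤ c - 1)
      have h3 : (1 / (c - 1)) * (c - 1) = 1 := by field_simp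
      rwa [← Real.rpow_mul hY0.le, h3, Real.rpow_one] at h2
    have hLpsi : Q * ψ 1 * L ^ c ≤ ψ L := by
      have h := PL' hPL 1 L le_rfl (by linarith)
      rwa [Real.one_rpow, mul_one] at h
    have hS2L : ψ L ≤ L * ψ' L := psi_S2 hν0 hνint hα hβ hψ hderiv L (by linarith)
    have hLc : L ^ c = L ^ (c - 1) * L := by
      nth_rewrite 1 [show c = (c - 1) + 1 by ring]
      rw [Real.rpow_add hL0, Real.rpow_one]
    have hψ'Lgt : ψ' 0 < ψ' L := by
      have c2 : Q * ψ 1 * L ^ (c - 1) ≤ ψ' L := by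
        have h5 : Q * ψ 1 * (L ^ (c - 1) * L) ≤ L * ψ' L := by
          rw [← hLc]; exact le_trans hLpsi hS2L
        nlinarith
      have c3 : Q * ψ 1 * Y ≤ Q * ψ 1 * L ^ (c - 1) :=
        mul_le_mul_of_nonneg_left hYL (by positivity)
      have c4 : Q * ψ 1 * Y = |ψ' 0| + 1 := by rw [hY]; field_simp
      nlinarith [le_abs_self (ψ' 0)]
    have hd : ∀ x ∈ Set.Icc (1:ℝ) L, HasDerivWithinAt ψ (ψ' x) (Set.Icc 1 L) x :=
      fun x hx => (hderiv x (by linarith [hx.1])).hasDerivWithinAt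
    obtain ⟨ξ, hξmem, hξeq⟩ :=
      exists_hasDerivWithinAt_eq_of_gt_of_lt (by linarith : (1:ℝ) ≤ L) hd hgt hψ'Lgt
    have hξ0 : 0 < ξ := by linarith [hξmem.1]
    have hψξ : 0 < ψ ξ := hψpos ξ hξ0
    have e1 : φinv (ψ' 0) = ψ ξ := by
      have h := hφinv₂ (ψ ξ) hψξ.le
      rwa [hinv₂ ξ hξ0.le, hξeq] at h
    have e2 : φinv (ψ' 0) = 0 := by
      have h := hφinv₂ 0 le_rfl
      rwa [hψinv0] at h
    rw [e2] at e1
    linarith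
  -- choose the scale s
  set X := 4 / ((c - 1) * Q ^ 2) with hX
  have hX0 : 0 < X := by positivity
  set s := max 1 (X ^ (1 / (c - 1))) with hs
  have hs1 : (1:ℝ) ≤ s := le_max_left _ _
  have hs0 : (0:ℝ) < s := by linarith
  have hsX : X ≤ s ^ (c - 1) := by
    have h1 : X ^ (1 / (c - 1)) ≤ s := le_max_right _ _
    have h2 := Real.rpow_le_rpow (Real.rpow_nonneg hX0.le _) h1 (by linarith : (0:ℝ) ≤ c - 1)
    have h3 : (1 / (c - 1)) * (c - 1) = 1 := by field_simp
    rwa [← Real.rpow_mul hX0.le, h3, Real.rpow_one] at h2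
  set M := max α (ψ' 1) with hM
  have hM0 : 0 ≤ M := le_trans hα (le_max_left _ _)
  have hIs : 0 < ∫ u in Set.Ioi s, 1 / ψ u := pos_int hψpos hext s hs1
  refine ⟨min (1 / (1 + M)) (∫ u in Set.Ioi s, 1 / ψ u), by positivity,
    8 * s + 1, by linarith, ?_⟩
  intro r hr hrr₁
  have hr1 : r < 1 / (1 + M) := lt_of_lt_of_le hrr₁ (min_le_left _ _)
  have hrs : r < ∫ u in Set.Ioi s, 1 / ψ u := lt_of_lt_of_le hrr₁ (min_le_right _ _)
  have hMr : 1 + M < 1 / r := by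
    rw [lt_div_iff₀ hr]
    rw [lt_div_iff₀ (by positivity : (0:ℝ) < 1 + M)] at hr1
    nlinarith
  have hαr : α ≤ 1 / r := by
    have := le_max_left α (ψ' 1)
    rw [← hM] at this
    linarith
  obtain ⟨hm0, hm1⟩ := hφinv₁ (1 / r) hαr
  have hmpos : 0 < φinv (1 / r) := by
    rcases hm0.lt_or_eq with h | h
    · exact h
    · exfalso
      rw [← h, hψinv0] at hm1
      have h2 : ψ' 1 ≤ M := le_max_right _ _
      linarith
  have hlz : 0 < ψinv (φinv (1 / r)) := hinvpos _ hmpos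
  have hpsl : ψ (ψinv (φinv (1 / r))) = φinv (1 / r) := hinv₁ _ hm0
  have hvs : s < v r := v_lower hψpos hv r s hr hs1 hrs
  have hv0 : 0 < v r := (hv r hr).1
  set lam := v r / s with hlam
  have hlam1 : 1 < lam := (one_lt_div hs0).mpr hvs
  have hlam0 : 0 < lam := by linarith
  have hvreq : v r = s * lam := by rw [hlam]; field_simp
  have hψlam : 0 < ψ lam := hψpos lam hlam0
  have hsl1 : (1:ℝ) ≤ s * lam := by nlinarith
  have hψsl : 0 < ψ (s * lam) := hψpos _ (by nlinarith)
  -- tail estimate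
  have hr_le : r ≤ (s * lam) / ((c - 1) * Q * ψ (s * lam)) := by
    have h := tail_bound hψpos hext hc1 hQ0 hPL (s * lam) hsl1
    have h2 := (hv r hr).2
    rw [hvreq] at h2
    rw [← h2]
    exact h
  have hkey : Q * ψ lam * s ^ c ≤ ψ (s * lam) := by
    have h := PL' hPL lam (s * lam) hlam1.le (by nlinarith)
    rw [Real.mul_rpow hs0.le hlam0.le] at h
    have hlc : 0 < lam ^ c := Real.rpow_pos_of_pos hlam0 c
    nlinarith
  have hsc : 0 < s ^ c := Real.rpow_pos_of_pos hs0 c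
  have hscX : X * s ≤ s ^ c := by
    have h1 : s ^ c = s ^ (c - 1) * s := by
      nth_rewrite 1 [show c = (c - 1) + 1 by ring]
      rw [Real.rpow_add hs0, Real.rpow_one]
    rw [h1]
    nlinarith
  have hmain : r * ψ lam ≤ lam / 4 := by
    have hden : 0 < (c - 1) * Q * ψ (s * lam) := by positivity
    rw [le_div_iff₀ hden] at hr_le
    -- hr_le : r * ((c-1) * Q * ψ (s*lam)) ≤ s * lam
    have t1 : r * ((c - 1) * Q) * (Q * ψ lam * s ^ c) ≤ r * ((c - 1) * Q) * ψ (s * lam) :=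
      mul_le_mul_of_nonneg_left hkey (by positivity)
    have t2 : r * ((c - 1) * Q) * ψ (s * lam) ≤ s * lam := by nlinarith
    have t4 : (c - 1) * Q ^ 2 * X = 4 := by
      rw [hX]; field_simp
    -- 4 * s * (r * ψ lam) ≤ (c-1) Q² s^c (r ψ lam) ≤ s lam
    have t5 : 4 * s * (r * ψ lam) ≤ (c - 1) * Q ^ 2 * s ^ c * (r * ψ lam) := by
      have h6 : 4 * s = (c - 1) * Q ^ 2 * (X * s) := by rw [← t4]; ring
      rw [h6]
      have h7 : (c - 1) * Q ^ 2 * (X * s) ≤ (c - 1) * Q ^ 2 * s ^ c := by nlinarith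
      nlinarith [mul_nonneg hr.le hψlam.le]
    have t6 : (c - 1) * Q ^ 2 * s ^ c * (r * ψ lam) ≤ s * lam := by nlinarith
    nlinarith
  by_cases hAB : lam ≤ 2 * ψinv (φinv (1 / r))
  · -- Case A
    have h4 : ψinv (φinv (1 / r)) * ψ' (ψinv (φinv (1 / r)))
        ≤ 4 * ψ (ψinv (φinv (1 / r))) := by
      have := psi_S4 hν0 hνint hα hβ hψ hderiv _ hlz
      linarith
    rw [hpsl, hm1] at h4
    have h5 : ψinv (φinv (1 / r)) ≤ 4 * r * φinv (1 / r) := by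
      have h6 := mul_le_mul_of_nonneg_right h4 hr.le
      have h7 : ψinv (φinv (1 / r)) * (1 / r) * r = ψinv (φinv (1 / r)) := by
        field_simp
      rw [h7] at h6
      linarith
    rw [hvreq]
    calc s * lam ≤ s * (2 * ψinv (φinv (1 / r))) := by nlinarith
      _ ≤ s * (2 * (4 * r * φinv (1 / r))) := by nlinarith
      _ = 8 * s * (r * φinv (1 / r)) := by ring
      _ < (8 * s + 1) * (r * φinv (1 / r)) := by nlinarith [mul_pos hr hmpos]
  · push_neg at hAB
    exfalso
    have h1 : ψ' (ψinv (φinv (1 / r))) ≤ ψ' (lam / 2) :=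
      psi_S3 hν0 hνint hβ hψ hderiv _ _ hlz (by linarith)
    have h2 : (lam / 2) * ψ' (lam / 2) ≤ ψ lam :=
      psi_S1 hν0 hνint hα hβ hψ hderiv lam hlam0
    rw [hm1] at h1
    have h4 : (lam / 2) * (1 / r) ≤ ψ lam :=
      le_trans (mul_le_mul_of_nonneg_left h1 (by linarith)) h2
    have h6 := mul_le_mul_of_nonneg_right h4 hr.le
    have h7 : (lam / 2) * (1 / r) * r = lam / 2 := by field_simp
    rw [h7] at h6
    nlinarith
end
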